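/- arXiv:2102.01752 — 5 statements merged into one kernel-verified Lean document; each statement's English description precedes it below -/
import Mathlib

section
/- Theorem 1 (main error bound). Let {ψₙ*} (n = 1,…,N) be optimal congruent potentials for (P₁,…,P_N; α₁,…,α_N; P̄). Let B ∈ (0,∞) and let ψ₁,…,ψ_N : ℝ^D → ℝ be B-smooth differentiable convex functions whose convex conjugates ψ̄ₙ are differentiable, (1/B)-strongly convex, and satisfy ∇ψ̄ₙ(∇ψₙ(x)) = x for all x ∈ ℝ^D. Set Δ = Σₙ αₙ ∫ ψₙ dPₙ − Σₙ αₙ ∫ ψₙ* dPₙ. Then Δ + ∫ (Σₙ αₙ ψ̄ₙ(y) − ‖y‖²/2) dP̄(y) ≥ (1/(2B)) Σₙ αₙ ∫ ‖∇ψₙ*(x) − ∇ψₙ(x)‖² dPₙ(x). -/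
open MeasureTheory RealInnerProductSpace

section Aux
variable {E : Type*} [NormedAddCommGroup E] [InnerProductSpace ℝ E] [CompleteSpace E]

lemma aux_fderiv_inner {f : E → ℝ} {x : E} (hf : DifferentiableAt ℝ f x) (v : E) :
    fderiv ℝ f x v = ⟪gradient f x, v⟫ := by
  have h := hf.hasGradientAt
  rw [hasGradientAt_iff_hasFDerivAt] at h
  rw [h.fderiv]; simp [InnerProductSpace.toDual_apply_apply]

omit [CompleteSpace E] in
lemma aux_grad_ineq {f : E → ℝ} (hconv : ConvexOn ℝ Set.univ f) (hdiff : Differentiable ℝ f)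
    (x y : E) : f x + fderiv ℝ f x (y - x) ≤ f y := by
  set g : ℝ → ℝ := fun t => f (x + t • (y - x)) with hg
  have hline : ∀ t : ℝ, HasDerivAt (fun t : ℝ => x + t • (y - x)) (y - x) t := fun t => by
    simpa using ((hasDerivAt_id t).smul_const (y - x)).const_add x
  have hgd : ∀ t, HasDerivAt g (fderiv ℝ f (x + t • (y - x)) (y - x)) t := fun t =>
    (hdiff _).hasFDerivAt.comp_hasDerivAt t (hline t)
  have hgconv : ConvexOn ℝ Set.univ g := by
    have := hconv.comp_affineMap (AffineMap.lineMap x y)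
    simp only [Set.preimage_univ] at this
    have e : g = f ∘ AffineMap.lineMap x y := by
      funext t; simp [g, AffineMap.lineMap_apply, add_comm]
    rw [e]; exact this
  have h := hgconv.deriv_le_slope (Set.mem_univ (0:ℝ)) (Set.mem_univ (1:ℝ)) one_pos
    ((hgd 0).differentiableAt)
  rw [(hgd 0).deriv] at h
  have hg0 : g 0 = f x := by simp [g]
  have hg1 : g 1 = f y := by simp [g]
  rw [slope_def_field] at h
  simp only [hg0, hg1, zero_smul, add_zero] at h
  have h1 : (f y - f x) / (1 - 0) = f y - f x := by norm_num
  rw [h1] at h; linarith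

lemma aux_grad_ineq' {f : E → ℝ} (hconv : ConvexOn ℝ Set.univ f) (hdiff : Differentiable ℝ f)
    (x y : E) : f x + ⟪gradient f x, y - x⟫ ≤ f y := by
  have := aux_grad_ineq hconv hdiff x y
  rwa [aux_fderiv_inner (hdiff x)] at this

lemma aux_fenchel {f : E → ℝ} (hconv : ConvexOn ℝ Set.univ f) (hdiff : Differentiable ℝ f)
    (x₀ : E) {s : ℝ} (hs : IsLUB (Set.range fun x => ⟪x, gradient f x₀⟫ - f x) s) :
    s = ⟪x₀, gradient f x₀⟫ - f x₀ := by
  have hg : IsGreatest (Set.range fun x => ⟪x, gradient f x₀⟫ - f x)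
      (⟪x₀, gradient f x₀⟫ - f x₀) := by
    constructor
    · exact ⟨x₀, rfl⟩
    · rintro _ ⟨x, rfl⟩
      have h := aux_grad_ineq' hconv hdiff x₀ x
      rw [inner_sub_right] at h
      have h2 : ⟪gradient f x₀, x⟫ = ⟪x, gradient f x₀⟫ := real_inner_comm _ _
      have h3 : ⟪gradient f x₀, x₀⟫ = ⟪x₀, gradient f x₀⟫ := real_inner_comm _ _
      rw [h2, h3] at h
      dsimp only
      linarith
  exact hs.unique hg.isLUB

lemma aux_strong {φ : E → ℝ} (hdiff : Differentiable ℝ φ) {c : ℝ}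
    (hconv : ConvexOn ℝ Set.univ (fun y => φ y - c * ‖y‖ ^ 2))
    (y₀ y : E) : φ y₀ + ⟪gradient φ y₀, y - y₀⟫ + c * ‖y - y₀‖ ^ 2 ≤ φ y := by
  have hnsq : ∀ z : E, HasFDerivAt (fun w : E => c * ‖w‖ ^ 2) (c • (2 • innerSL ℝ z)) z :=
    fun z => (hasStrictFDerivAt_norm_sq z).hasFDerivAt.const_mul c
  have hgdiff : Differentiable ℝ (fun y => φ y - c * ‖y‖ ^ 2) :=
    hdiff.sub fun z => (hnsq z).differentiableAt
  have hfd : HasFDerivAt (fun y => φ y - c * ‖y‖ ^ 2)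
      (fderiv ℝ φ y₀ - c • (2 • innerSL ℝ y₀)) y₀ := (hdiff y₀).hasFDerivAt.sub (hnsq y₀)
  have key := aux_grad_ineq hconv hgdiff y₀ y
  rw [hfd.fderiv] at key
  simp only [ContinuousLinearMap.sub_apply, ContinuousLinearMap.smul_apply, smul_eq_mul,
    innerSL_apply_apply, nsmul_eq_mul] at key
  rw [aux_fderiv_inner (hdiff y₀)] at key
  have e1 : ‖y - y₀‖ ^ 2 = ‖y‖ ^ 2 - 2 * ⟪y, y₀⟫ + ‖y₀‖ ^ 2 := norm_sub_sq_real y y₀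
  have e2 : ⟪y₀, y - y₀⟫ = ⟪y₀, y⟫ - ‖y₀‖ ^ 2 := by
    rw [inner_sub_right, real_inner_self_eq_norm_sq]
  have e3 : ⟪y₀, y⟫ = ⟪y, y₀⟫ := real_inner_comm _ _
  rw [e2, e3] at key
  push_cast at key
  rw [e1]
  nlinarith [key]

end Aux

lemma aux_meas_grad {D : ℕ} (f : EuclideanSpace ℝ (Fin D) → ℝ) :
    Measurable (gradient f) := by
  have h : gradient f = fun x =>
      (InnerProductSpace.toDual ℝ (EuclideanSpace ℝ (Fin D))).symm (fderiv ℝ f x) := rfl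
  rw [h]
  exact ((InnerProductSpace.toDual ℝ _).symm.continuous.measurable).comp
    (measurable_fderiv ℝ f)


/-- Theorem 1 (main error bound). For optimal congruent potentials `{ψₙ*}` and
`B`-smooth differentiable convex candidates `{ψₙ}` with differentiable
`(1/B)`-strongly convex conjugates `{ψ̄ₙ}` satisfying `∇ψ̄ₙ (∇ψₙ x) = x`,
with `Δ = Σₙ αₙ ∫ ψₙ dPₙ − Σₙ αₙ ∫ ψₙ* dPₙ`,
`Δ + ∫ (Σₙ αₙ ψ̄ₙ(y) − ‖y‖²/2) dP̄ ≥ (1/(2B)) Σₙ αₙ ∫ ‖∇ψₙ* − ∇ψₙ‖² dPₙ`. -/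
theorem barycenter_main_error_bound {D N : ℕ}
    (P : Fin N → Measure (EuclideanSpace ℝ (Fin D)))
    (Pbar : Measure (EuclideanSpace ℝ (Fin D)))
    [∀ n, IsProbabilityMeasure (P n)] [IsProbabilityMeasure Pbar]
    (α : Fin N → ℝ) (hα : ∀ n, 0 < α n) (hαsum : ∑ n, α n = 1)
    -- optimal congruent potentials ψₙ* with conjugates ψ̄ₙ*
    (ψs ψbs : Fin N → EuclideanSpace ℝ (Fin D) → ℝ)
    (hψs_conv : ∀ n, ConvexOn ℝ Set.univ (ψs n))
    (hψs_diff : ∀ n, Differentiable ℝ (ψs n))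
    (hψbs_diff : ∀ n, Differentiable ℝ (ψbs n))
    (hψbs_conj : ∀ n y, IsLUB (Set.range fun x => ⟪x, y⟫ - ψs n x) (ψbs n y))
    (hpush : ∀ n, (P n).map (gradient (ψs n)) = Pbar)
    (hsinv : ∀ n x, gradient (ψbs n) (gradient (ψs n) x) = x)
    (hcong : ∀ y, ∑ n, α n * ψbs n y = ‖y‖ ^ 2 / 2)
    (hcongGrad : ∀ y, ∑ n, α n • gradient (ψbs n) y = y)
    -- candidate potentials ψₙ with conjugates ψ̄ₙ
    (B : ℝ) (hB : 0 < B)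
    (ψ ψb : Fin N → EuclideanSpace ℝ (Fin D) → ℝ)
    (hψ_conv : ∀ n, ConvexOn ℝ Set.univ (ψ n))
    (hψ_diff : ∀ n, Differentiable ℝ (ψ n))
    (hψ_smooth : ∀ n x y, ‖gradient (ψ n) x - gradient (ψ n) y‖ ≤ B * ‖x - y‖)
    (hψb_diff : ∀ n, Differentiable ℝ (ψb n))
    (hψb_conj : ∀ n y, IsLUB (Set.range fun x => ⟪x, y⟫ - ψ n x) (ψb n y))
    (hψb_sconv : ∀ n, ConvexOn ℝ Set.univ (fun y => ψb n y - (1 / B) / 2 * ‖y‖ ^ 2))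
    (hψb_inv : ∀ n x, gradient (ψb n) (gradient (ψ n) x) = x)
    -- integrability of the stated integrals
    (hint1 : ∀ n, Integrable (ψ n) (P n))
    (hint2 : ∀ n, Integrable (ψs n) (P n))
    (hint3 : Integrable (fun y => ∑ n, α n * ψb n y - ‖y‖ ^ 2 / 2) Pbar)
    (hint4 : ∀ n, Integrable (fun x => ‖gradient (ψs n) x - gradient (ψ n) x‖ ^ 2) (P n)) :
    ((∑ n, α n * ∫ x, ψ n x ∂(P n)) - ∑ n, α n * ∫ x, ψs n x ∂(P n)) +
        ∫ y, (∑ n, α n * ψb n y - ‖y‖ ^ 2 / 2) ∂Pbar ≥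
      (1 / (2 * B)) * ∑ n, α n * ∫ x, ‖gradient (ψs n) x - gradient (ψ n) x‖ ^ 2 ∂(P n) := by
  classical
  set c : ℝ := (1 / B) / 2 with hcdef
  have hc' : (1 : ℝ) / (2 * B) = c := by rw [hcdef]; ring
  set v : Fin N → EuclideanSpace ℝ (Fin D) → ℝ := fun n y => ψb n y - ψbs n y with hvdef
  -- pointwise key inequality
  have key : ∀ n x, ψs n x - ψ n x + c * ‖gradient (ψs n) x - gradient (ψ n) x‖ ^ 2
      ≤ v n (gradient (ψs n) x) := by
    intro n x
    have hstrong := aux_strong (hψb_diff n) (hψb_sconv n) (gradient (ψ n) x) (gradient (ψs n) x)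
    rw [hψb_inv n x] at hstrong
    have hF1 : ψb n (gradient (ψ n) x) = ⟪x, gradient (ψ n) x⟫ - ψ n x :=
      aux_fenchel (hψ_conv n) (hψ_diff n) x (hψb_conj n _)
    have hF2 : ψbs n (gradient (ψs n) x) = ⟪x, gradient (ψs n) x⟫ - ψs n x :=
      aux_fenchel (hψs_conv n) (hψs_diff n) x (hψbs_conj n _)
    have hinner : ⟪x, gradient (ψs n) x - gradient (ψ n) x⟫
        = ⟪x, gradient (ψs n) x⟫ - ⟪x, gradient (ψ n) x⟫ := inner_sub_right _ _ _
    rw [hF1, hinner] at hstrong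
    simp only [v]
    rw [hF2]
    linarith
  -- measurability and integrability
  have hvcont : ∀ n, Continuous (v n) := fun n =>
    ((hψb_diff n).continuous).sub ((hψbs_diff n).continuous)
  have hmeas : ∀ n, Measurable (gradient (ψs n)) := fun n => aux_meas_grad _
  have hKint : ∀ n, Integrable
      (fun x => ψ n x - ψs n x - c * ‖gradient (ψs n) x - gradient (ψ n) x‖ ^ 2) (P n) :=
    fun n => ((hint1 n).sub (hint2 n)).sub ((hint4 n).const_mul c)
  set neg : Fin N → EuclideanSpace ℝ (Fin D) → ℝ := fun n y => max (-(v n y)) 0 with hnegdef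
  have hnegcont : ∀ n, Continuous (neg n) := fun n => ((hvcont n).neg.max continuous_const)
  have hnegnn : ∀ n y, 0 ≤ neg n y := fun n y => le_max_right _ _
  have hvlb : ∀ n y, -(neg n y) ≤ v n y := fun n y => neg_le.mpr (le_max_left _ _)
  have hnegint : ∀ n, Integrable (neg n) Pbar := by
    intro n
    rw [← hpush n,
      integrable_map_measure ((hnegcont n).aestronglyMeasurable) (hmeas n).aemeasurable]
    apply Integrable.mono' (hKint n).abs
      (((hnegcont n).measurable.comp (hmeas n)).aestronglyMeasurable)
    refine ae_of_all _ fun x => ?_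
    have hk := key n x
    simp only [Function.comp, neg, Real.norm_eq_abs]
    rw [abs_of_nonneg (le_max_right _ _)]
    refine max_le (le_trans (by linarith) (le_abs_self
      (ψ n x - ψs n x - c * ‖gradient (ψs n) x - gradient (ψ n) x‖ ^ 2))) (abs_nonneg _)
  have hsum_v : ∀ y, (∑ m, α m * ψb m y) - ‖y‖ ^ 2 / 2 = ∑ m, α m * v m y := by
    intro y
    rw [← hcong y, ← Finset.sum_sub_distrib]
    simp [v, mul_sub]
  have hSnn : ∀ y, 0 ≤ ∑ m, α m * neg m y := fun y =>
    Finset.sum_nonneg fun m _ => mul_nonneg (hα m).le (hnegnn m y)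
  have hub : ∀ n y, α n * v n y ≤ ((∑ m, α m * ψb m y) - ‖y‖ ^ 2 / 2) + ∑ m, α m * neg m y := by
    intro n y
    rw [hsum_v y]
    have h1 : ∀ m ∈ Finset.univ.erase n, -(α m * neg m y) ≤ α m * v m y := by
      intro m _
      have h := hvlb m y
      nlinarith [(hα m).le]
    have h2 : ∑ m ∈ Finset.univ.erase n, -(α m * neg m y)
        ≤ ∑ m ∈ Finset.univ.erase n, α m * v m y := Finset.sum_le_sum h1
    rw [Finset.sum_neg_distrib] at h2
    have h3 : ∑ m ∈ Finset.univ.erase n, α m * neg m y ≤ ∑ m, α m * neg m y :=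
      Finset.sum_le_sum_of_subset_of_nonneg (Finset.erase_subset _ _)
        (fun m _ _ => mul_nonneg (hα m).le (hnegnn m y))
    have h4 : α n * v n y + ∑ m ∈ Finset.univ.erase n, α m * v m y = ∑ m, α m * v m y :=
      Finset.add_sum_erase Finset.univ (fun m => α m * v m y) (Finset.mem_univ n)
    linarith
  have hvint : ∀ n, Integrable (v n) Pbar := by
    intro n
    apply Integrable.mono' ((hnegint n).add
      ((hint3.abs.add (integrable_finset_sum _ fun m _ => (hnegint m).const_mul (α m))).const_mul
        (1 / α n)))
    · exact (hvcont n).aestronglyMeasurable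
    refine ae_of_all _ fun y => ?_
    show ‖v n y‖ ≤ neg n y +
      (1 / α n) * (|(∑ m, α m * ψb m y) - ‖y‖ ^ 2 / 2| + ∑ m, α m * neg m y)
    have h1 := hub n y
    have h3 := hSnn y
    have h4 : (0:ℝ) ≤ |(∑ m, α m * ψb m y) - ‖y‖ ^ 2 / 2| := abs_nonneg _
    have h5 := le_abs_self ((∑ m, α m * ψb m y) - ‖y‖ ^ 2 / 2)
    have hαn := hα n
    have h6 : (0:ℝ) ≤ (1 / α n) * (|(∑ m, α m * ψb m y) - ‖y‖ ^ 2 / 2| + ∑ m, α m * neg m y) :=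
      mul_nonneg (by positivity) (add_nonneg h4 h3)
    rw [Real.norm_eq_abs]
    rcases le_total (v n y) 0 with h | h
    · rw [abs_of_nonpos h]
      have h7 : -(v n y) ≤ neg n y := le_max_left _ _
      exact h7.trans (le_add_of_nonneg_right h6)
    · rw [abs_of_nonneg h]
      have h8 : α n * v n y ≤ |(∑ m, α m * ψb m y) - ‖y‖ ^ 2 / 2| + ∑ m, α m * neg m y := by
        linarith
      have h9 : v n y = (1 / α n) * (α n * v n y) := by field_simp
      have h10 := mul_le_mul_of_nonneg_left h8 (le_of_lt (by positivity : (0:ℝ) < 1 / α n))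
      calc v n y = (1 / α n) * (α n * v n y) := h9
        _ ≤ (1 / α n) * (|(∑ m, α m * ψb m y) - ‖y‖ ^ 2 / 2| + ∑ m, α m * neg m y) := h10
        _ ≤ neg n y + (1 / α n) * (|(∑ m, α m * ψb m y) - ‖y‖ ^ 2 / 2|
            + ∑ m, α m * neg m y) := le_add_of_nonneg_left (hnegnn n y)
  have huint : ∀ n, Integrable (fun x => v n (gradient (ψs n) x)) (P n) := by
    intro n
    have h := (integrable_map_measure ((hvcont n).aestronglyMeasurable)
      (hmeas n).aemeasurable).mp (by rw [hpush n]; exact hvint n)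
    exact h
  have hint_eq : ∀ n, ∫ y, v n y ∂Pbar = ∫ x, v n (gradient (ψs n) x) ∂(P n) := by
    intro n
    rw [← hpush n]
    exact integral_map (hmeas n).aemeasurable ((hvcont n).aestronglyMeasurable)
  have hPbar_eq : ∫ y, ((∑ m, α m * ψb m y) - ‖y‖ ^ 2 / 2) ∂Pbar
      = ∑ m, α m * ∫ x, v m (gradient (ψs m) x) ∂(P m) := by
    have e1 : ∫ y, ((∑ m, α m * ψb m y) - ‖y‖ ^ 2 / 2) ∂Pbar
        = ∫ y, ∑ m, α m * v m y ∂Pbar := by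
      apply integral_congr_ae
      filter_upwards with y
      exact hsum_v y
    rw [e1, integral_finset_sum _ (fun m _ => (hvint m).const_mul (α m))]
    refine Finset.sum_congr rfl fun m _ => ?_
    rw [integral_const_mul, hint_eq m]
  have hsplit : ∀ n, ∫ x, (ψ n x - ψs n x + v n (gradient (ψs n) x)
        - c * ‖gradient (ψs n) x - gradient (ψ n) x‖ ^ 2) ∂(P n)
      = ((∫ x, ψ n x ∂(P n)) - ∫ x, ψs n x ∂(P n)) + (∫ x, v n (gradient (ψs n) x) ∂(P n))
        - c * ∫ x, ‖gradient (ψs n) x - gradient (ψ n) x‖ ^ 2 ∂(P n) := by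
    intro n
    have hI0 : Integrable (fun x => ψ n x - ψs n x) (P n) := (hint1 n).sub (hint2 n)
    have hI1 : Integrable (fun x => ψ n x - ψs n x + v n (gradient (ψs n) x)) (P n) :=
      hI0.add (huint n)
    have hI2 : Integrable (fun x => c * ‖gradient (ψs n) x - gradient (ψ n) x‖ ^ 2) (P n) :=
      (hint4 n).const_mul c
    rw [integral_sub hI1 hI2, integral_add hI0 (huint n), integral_sub (hint1 n) (hint2 n),
      integral_const_mul]
  have hnn : ∀ n, 0 ≤ ((∫ x, ψ n x ∂(P n)) - ∫ x, ψs n x ∂(P n))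
      + (∫ x, v n (gradient (ψs n) x) ∂(P n))
      - c * ∫ x, ‖gradient (ψs n) x - gradient (ψ n) x‖ ^ 2 ∂(P n) := by
    intro n
    rw [← hsplit n]
    refine integral_nonneg fun x => ?_
    simp only [Pi.zero_apply]
    linarith [key n x]
  rw [ge_iff_le, hc', hPbar_eq]
  have hfin : 0 ≤ ∑ n, α n * (((∫ x, ψ n x ∂(P n)) - ∫ x, ψs n x ∂(P n))
      + (∫ x, v n (gradient (ψs n) x) ∂(P n))
      - c * ∫ x, ‖gradient (ψs n) x - gradient (ψ n) x‖ ^ 2 ∂(P n)) :=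
    Finset.sum_nonneg fun n _ => mul_nonneg (hα n).le (hnn n)
  have hexp : ∑ n, α n * (((∫ x, ψ n x ∂(P n)) - ∫ x, ψs n x ∂(P n))
      + (∫ x, v n (gradient (ψs n) x) ∂(P n))
      - c * ∫ x, ‖gradient (ψs n) x - gradient (ψ n) x‖ ^ 2 ∂(P n))
      = ((∑ n, α n * ∫ x, ψ n x ∂(P n)) - ∑ n, α n * ∫ x, ψs n x ∂(P n))
        + (∑ n, α n * ∫ x, v n (gradient (ψs n) x) ∂(P n))
        - c * ∑ n, α n * ∫ x, ‖gradient (ψs n) x - gradient (ψ n) x‖ ^ 2 ∂(P n) := by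
    rw [Finset.mul_sum, ← Finset.sum_sub_distrib, ← Finset.sum_add_distrib,
      ← Finset.sum_sub_distrib]
    refine Finset.sum_congr rfl fun n _ => ?_
    ring
  rw [hexp] at hfin
  linarith
end

section
/- Theorem 2, part 1 (multiple correlations upper bound, inequality (10)). Let {ψₙ*} be optimal congruent potentials for (P₁,…,P_N; α₁,…,α_N; P̄). Let τ ≥ 1 and P̂ be a Borel probability measure with P̄(A) ≤ τ·P̂(A) for every Borel set A. For each n, let ψₙ† : ℝ^D → ℝ be differentiable convex, and let ψ̄ₙ‡ : ℝ^D → ℝ be β-strongly convex and B-smooth differentiable convex (0 < β ≤ B < ∞) with differentiable convex conjugate ψₙ‡ satisfying ∇ψ̄ₙ‡(∇ψₙ‡(x)) = x and ∇ψₙ‡(∇ψ̄ₙ‡(y)) = y for all x, y (in particular ∇ψₙ‡ is (1/β)-Lipschitz). Let λ > B/(2β²). Define the regularized objective M = Σₙ αₙ ∫ [⟨x, ∇ψₙ†(x)⟩ − ψ̄ₙ‡(∇ψₙ†(x))] dPₙ(x) + τ · ∫ [Σₙ αₙ ψ̄ₙ‡(y) − ‖y‖²/2]₊ dP̂(y)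 + λ · Σₙ αₙ ∫ ‖∇ψ̄ₙ‡(∇ψₙ†(x)) − x‖² dPₙ(x). Then M ≥ Σₙ αₙ ∫ ψₙ* dPₙ. -/
open MeasureTheory RealInnerProductSpace

section Aux

variable {E : Type*} [NormedAddCommGroup E] [InnerProductSpace ℝ E] [CompleteSpace E]

lemma convex_gradient_ineq {f : E → ℝ} (hc : ConvexOn ℝ Set.univ f)
    (hd : Differentiable ℝ f) (x y : E) :
    f x + ⟪gradient f x, y - x⟫ ≤ f y := by
  set v := y - x with hv
  have hgrad : HasGradientAt f (gradient f x) x := (hd x).hasGradientAt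
  have hfd : HasFDerivAt f (InnerProductSpace.toDual ℝ E (gradient f x)) x :=
    hgrad.hasFDerivAt
  have hline : ∀ t : ℝ, HasDerivAt (fun t : ℝ => x + t • v) v t := by
    intro t
    simpa using ((hasDerivAt_id t).smul_const v).const_add x
  have hφ : HasDerivAt (fun t : ℝ => f (x + t • v)) ⟪gradient f x, v⟫ 0 := by
    have hfd' : HasFDerivAt f (InnerProductSpace.toDual ℝ E (gradient f x)) (x + (0:ℝ) • v) := by
      simpa using hfd
    have := hfd'.comp_hasDerivAt 0 (hline 0)
    rw [InnerProductSpace.toDual_apply_apply] at this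
    exact this
  have hconv : ConvexOn ℝ Set.univ (fun t : ℝ => f (x + t • v)) := by
    have := hc.comp_affineMap (AffineMap.lineMap x y : ℝ →ᵃ[ℝ] E)
    have heq : (fun t : ℝ => f (x + t • v)) = f ∘ (AffineMap.lineMap x y : ℝ →ᵃ[ℝ] E) := by
      funext t
      simp [AffineMap.lineMap_apply, hv]
      congr 1
      abel
    rw [heq]
    simpa using this
  have h01 : (0 : ℝ) < 1 := one_pos
  have := hconv.le_slope_of_hasDerivAt (Set.mem_univ 0) (Set.mem_univ 1) h01 hφ
  rw [slope_def_field] at this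
  have hxy : x + v = y := by rw [hv]; abel
  simp [hxy] at this
  have hg : ⟪gradient f x, v⟫ = (fderiv ℝ f x) v := by simp
  linarith [this]

lemma hasGradientAt_half_sq (c : ℝ) (y : E) :
    HasGradientAt (fun y : E => c / 2 * ‖y‖ ^ 2) (c • y) y := by
  rw [hasGradientAt_iff_hasFDerivAt]
  have h1 := ((hasFDerivAt_id y).inner ℝ (hasFDerivAt_id y)).const_mul (c / 2)
  have heq : (fun y : E => c / 2 * (⟪y, y⟫ : ℝ)) = fun y : E => c / 2 * ‖y‖ ^ 2 := by
    funext w; rw [real_inner_self_eq_norm_sq]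
  simp only [id_eq] at h1
  rw [heq] at h1
  convert h1 using 1
  · rfl
  ext v
  simp [InnerProductSpace.toDual_apply_apply, fderivInnerCLM_apply, real_inner_smul_left,
    real_inner_comm y v]
  ring

lemma strong_convex_grad_ineq {f : E → ℝ} {β : ℝ}
    (hc : ConvexOn ℝ Set.univ (fun y => f y - β / 2 * ‖y‖ ^ 2))
    (hd : Differentiable ℝ f) (y z : E) :
    f y + ⟪gradient f y, z - y⟫ + β / 2 * ‖z - y‖ ^ 2 ≤ f z := by
  set s := fun y : E => f y - β / 2 * ‖y‖ ^ 2 with hs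
  have hgs : ∀ w, HasGradientAt s (gradient f w - β • w) w := by
    intro w
    rw [hasGradientAt_iff_hasFDerivAt, map_sub]
    exact ((hd w).hasGradientAt.hasFDerivAt).sub (hasGradientAt_half_sq β w).hasFDerivAt
  have hsd : Differentiable ℝ s := fun w => (hgs w).differentiableAt
  have key := convex_gradient_ineq hc hsd y z
  rw [(hgs y).gradient] at key
  have hexp : ⟪gradient f y - β • y, z - y⟫
      = ⟪gradient f y, z - y⟫ - β * (⟪y, z⟫ - ‖y‖ ^ 2) := by
    simp [inner_sub_left, inner_sub_right, real_inner_smul_left, real_inner_self_eq_norm_sq]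
    ring
  have hnorm : β / 2 * ‖z - y‖ ^ 2
      = β / 2 * ‖z‖ ^ 2 - β * ⟪z, y⟫ + β / 2 * ‖y‖ ^ 2 := by
    rw [norm_sub_sq_real z y]; ring
  have hcomm : β * ⟪y, z⟫ = β * ⟪z, y⟫ := by rw [real_inner_comm]
  simp only [hs] at key
  rw [hexp] at key
  linarith [key, hnorm, hcomm]

lemma fenchel_eq {f g : E → ℝ} (hc : ConvexOn ℝ Set.univ f) (hd : Differentiable ℝ f)
    (hconj : ∀ y, IsLUB (Set.range fun x => ⟪x, y⟫ - f x) (g y)) (x : E) :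
    g (gradient f x) = ⟪x, gradient f x⟫ - f x := by
  have hub : (⟪x, gradient f x⟫ - f x)
      ∈ upperBounds (Set.range fun x' => ⟪x', gradient f x⟫ - f x') := by
    rintro r ⟨x', rfl⟩
    show ⟪x', gradient f x⟫ - f x' ≤ ⟪x, gradient f x⟫ - f x
    have h0 := convex_gradient_ineq hc hd x x'
    have h2 : ⟪gradient f x, x' - x⟫ = ⟪x', gradient f x⟫ - ⟪x, gradient f x⟫ := by
      rw [inner_sub_right]
      rw [real_inner_comm x' (gradient f x), real_inner_comm x (gradient f x)]
    linarith [h0, h2]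
  have h1 := (hconj (gradient f x)).2 hub
  have h2 : ⟪x, gradient f x⟫ - f x ≤ g (gradient f x) := (hconj (gradient f x)).1 ⟨x, rfl⟩
  linarith

lemma measurable_gradient' [MeasurableSpace E] [BorelSpace E] (f : E → ℝ) :
    Measurable (gradient f) := by
  show Measurable fun x => (InnerProductSpace.toDual ℝ E).symm (fderiv ℝ f x)
  exact ((InnerProductSpace.toDual ℝ E).symm.continuous.measurable).comp (measurable_fderiv ℝ f)

end Aux

/-- Theorem 2, part 1 (multiple correlations upper bound, inequality (10)):
the regularized objective `M` is at least `Σₙ αₙ ∫ ψₙ* dPₙ`. -/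
theorem multiple_correlations_upper_bound {D N : ℕ}
    (P : Fin N → Measure (EuclideanSpace ℝ (Fin D)))
    (Pbar : Measure (EuclideanSpace ℝ (Fin D)))
    [∀ n, IsProbabilityMeasure (P n)] [IsProbabilityMeasure Pbar]
    (α : Fin N → ℝ) (hα : ∀ n, 0 < α n) (hαsum : ∑ n, α n = 1)
    -- optimal congruent potentials ψₙ* with conjugates ψ̄ₙ*
    (ψs ψbs : Fin N → EuclideanSpace ℝ (Fin D) → ℝ)
    (hψs_conv : ∀ n, ConvexOn ℝ Set.univ (ψs n))
    (hψs_diff : ∀ n, Differentiable ℝ (ψs n))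
    (hψbs_diff : ∀ n, Differentiable ℝ (ψbs n))
    (hψbs_conj : ∀ n y, IsLUB (Set.range fun x => ⟪x, y⟫ - ψs n x) (ψbs n y))
    (hpush : ∀ n, (P n).map (gradient (ψs n)) = Pbar)
    (hsinv : ∀ n x, gradient (ψbs n) (gradient (ψs n) x) = x)
    (hcong : ∀ y, ∑ n, α n * ψbs n y = ‖y‖ ^ 2 / 2)
    (hcongGrad : ∀ y, ∑ n, α n • gradient (ψbs n) y = y)
    -- candidate potentials ψₙ† and ψ̄ₙ‡ with conjugates ψₙ‡
    (β B : ℝ) (hβ : 0 < β) (hβB : β ≤ B)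
    (ψdag ψbd ψd : Fin N → EuclideanSpace ℝ (Fin D) → ℝ)
    (hψdag_conv : ∀ n, ConvexOn ℝ Set.univ (ψdag n))
    (hψdag_diff : ∀ n, Differentiable ℝ (ψdag n))
    (hψbd_conv : ∀ n, ConvexOn ℝ Set.univ (ψbd n))
    (hψbd_diff : ∀ n, Differentiable ℝ (ψbd n))
    (hψbd_sconv : ∀ n, ConvexOn ℝ Set.univ (fun y => ψbd n y - β / 2 * ‖y‖ ^ 2))
    (hψbd_smooth : ∀ n x y, ‖gradient (ψbd n) x - gradient (ψbd n) y‖ ≤ B * ‖x - y‖)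
    (hψd_diff : ∀ n, Differentiable ℝ (ψd n))
    (hψd_conj : ∀ n x, IsLUB (Set.range fun y => ⟪y, x⟫ - ψbd n y) (ψd n x))
    (hψd_lip : ∀ n x y, ‖gradient (ψd n) x - gradient (ψd n) y‖ ≤ (1 / β) * ‖x - y‖)
    (hinv1 : ∀ n x, gradient (ψbd n) (gradient (ψd n) x) = x)
    (hinv2 : ∀ n y, gradient (ψd n) (gradient (ψbd n) y) = y)
    -- regularization parameters
    (lam : ℝ) (hlam : lam > B / (2 * β ^ 2))
    (τ : ℝ) (hτ : 1 ≤ τ)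
    (Phat : Measure (EuclideanSpace ℝ (Fin D))) [IsProbabilityMeasure Phat]
    (hdom : ∀ A : Set (EuclideanSpace ℝ (Fin D)), MeasurableSet A →
      Pbar A ≤ ENNReal.ofReal τ * Phat A)
    -- integrability of the stated integrals
    (hintM1 : ∀ n, Integrable
      (fun x => ⟪x, gradient (ψdag n) x⟫ - ψbd n (gradient (ψdag n) x)) (P n))
    (hintM2 : Integrable (fun y => max (∑ n, α n * ψbd n y - ‖y‖ ^ 2 / 2) 0) Phat)
    (hintM3 : ∀ n, Integrable
      (fun x => ‖gradient (ψbd n) (gradient (ψdag n) x) - x‖ ^ 2) (P n))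
    (hint_s : ∀ n, Integrable (ψs n) (P n))
    -- the regularized objective
    (M : ℝ)
    (hM : M = (∑ n, α n * ∫ x, (⟪x, gradient (ψdag n) x⟫
          - ψbd n (gradient (ψdag n) x)) ∂(P n))
      + τ * ∫ y, max (∑ n, α n * ψbd n y - ‖y‖ ^ 2 / 2) 0 ∂Phat
      + lam * ∑ n, α n * ∫ x, ‖gradient (ψbd n) (gradient (ψdag n) x) - x‖ ^ 2 ∂(P n))
    :
    M ≥ ∑ n, α n * ∫ x, ψs n x ∂(P n) := by
  classical
  -- abbreviations
  set q : Fin N → EuclideanSpace ℝ (Fin D) → ℝ := fun n y => ψbd n y - ψbs n y with hqdef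
  set F : Fin N → EuclideanSpace ℝ (Fin D) → ℝ := fun n x =>
    (⟪x, gradient (ψdag n) x⟫ - ψbd n (gradient (ψdag n) x))
      + lam * ‖gradient (ψbd n) (gradient (ψdag n) x) - x‖ ^ 2 with hFdef
  set ρ : EuclideanSpace ℝ (Fin D) → ℝ :=
    fun y => max (∑ n, α n * ψbd n y - ‖y‖ ^ 2 / 2) 0 with hρdef
  have hTmeas : ∀ n, Measurable (gradient (ψs n)) := fun n => measurable_gradient' _
  have hq_cont : ∀ n, Continuous (q n) := fun n =>
    ((hψbd_diff n).continuous).sub ((hψbs_diff n).continuous)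
  have hr_eq : ∀ y, ∑ n, α n * q n y = ∑ n, α n * ψbd n y - ‖y‖ ^ 2 / 2 := by
    intro y
    simp only [hqdef, mul_sub]
    rw [Finset.sum_sub_distrib, hcong y]
  have hlam' : 1 ≤ 2 * β * lam := by
    have hβ2 : (0:ℝ) < 2 * β ^ 2 := by positivity
    rw [gt_iff_lt, div_lt_iff₀ hβ2] at hlam
    nlinarith [hβ, hβB, hlam]
  -- the pointwise key inequality
  have key : ∀ n x, ψs n x - q n (gradient (ψs n) x) ≤ F n x := by
    intro n x
    have hsc := strong_convex_grad_ineq (hψbd_sconv n) (hψbd_diff n)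
      (gradient (ψdag n) x) (gradient (ψs n) x)
    have hf := fenchel_eq (hψs_conv n) (hψs_diff n) (hψbs_conj n) x
    set yd := gradient (ψdag n) x with hyd
    set ys := gradient (ψs n) x with hys
    set w := gradient (ψbd n) yd with hw
    have hsub1 : ⟪x, ys - yd⟫ = ⟪x, ys⟫ - ⟪x, yd⟫ := inner_sub_right _ _ _
    have hsub2 : ⟪x - w, ys - yd⟫ = ⟪x, ys - yd⟫ - ⟪w, ys - yd⟫ := inner_sub_left _ _ _
    have hcs : ⟪x - w, ys - yd⟫ ≤ ‖w - x‖ * ‖ys - yd‖ := by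
      have h1 := real_inner_le_norm (x - w) (ys - yd)
      rwa [norm_sub_rev x w] at h1
    have hquad : ‖w - x‖ * ‖ys - yd‖ ≤ lam * ‖w - x‖ ^ 2 + β / 2 * ‖ys - yd‖ ^ 2 := by
      nlinarith [sq_nonneg (‖w - x‖ - β * ‖ys - yd‖), hβ,
        mul_nonneg (sub_nonneg.mpr hlam') (sq_nonneg ‖w - x‖)]
    simp only [hqdef, hFdef]
    linarith [hsc, hsub1, hsub2, hcs, hquad, hf]
  -- integrability facts
  have hFint : ∀ n, Integrable (F n) (P n) := fun n =>
    (hintM1 n).add ((hintM3 n).const_mul lam)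
  have int_negT : ∀ n, Integrable
      (fun x => max (-(q n (gradient (ψs n) x))) 0) (P n) := by
    intro n
    refine Integrable.mono' ((hFint n).sub (hint_s n)).abs ?_ (ae_of_all _ fun x => ?_)
    · exact ((((hq_cont n).measurable.comp (hTmeas n)).neg.max
        measurable_const)).aestronglyMeasurable
    · rw [Real.norm_eq_abs, abs_of_nonneg (le_max_right _ _)]
      refine max_le (le_trans ?_ (le_abs_self _)) (abs_nonneg _)
      have := key n x
      simp only [Pi.sub_apply]
      linarith
  have int_neg_bar : ∀ n, Integrable (fun y => max (-(q n y)) 0) Pbar := by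
    intro n
    rw [← hpush n]
    refine (integrable_map_measure ?_ (hTmeas n).aemeasurable).mpr ?_
    · exact ((hq_cont n).neg.max continuous_const).aestronglyMeasurable
    · exact int_negT n
  -- ρ and the domination of Pbar by τ • Phat
  have hρ_cont : Continuous ρ := by
    refine Continuous.max ?_ continuous_const
    exact (continuous_finset_sum _ fun n _ =>
      continuous_const.mul (hψbd_diff n).continuous).sub
      ((continuous_norm.pow 2).div_const 2)
  have hρ_nonneg : ∀ y, 0 ≤ ρ y := fun y => le_max_right _ _
  have hmeasle : Pbar ≤ ENNReal.ofReal τ • Phat := by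
    refine Measure.le_iff.mpr fun s hs => ?_
    rw [Measure.smul_apply, smul_eq_mul]
    exact hdom s hs
  have lint_le : ∫⁻ y, ENNReal.ofReal (ρ y) ∂Pbar
      ≤ ENNReal.ofReal τ * ∫⁻ y, ENNReal.ofReal (ρ y) ∂Phat := by
    calc ∫⁻ y, ENNReal.ofReal (ρ y) ∂Pbar
        ≤ ∫⁻ y, ENNReal.ofReal (ρ y) ∂(ENNReal.ofReal τ • Phat) :=
          lintegral_mono' hmeasle le_rfl
      _ = ENNReal.ofReal τ * ∫⁻ y, ENNReal.ofReal (ρ y) ∂Phat :=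
          lintegral_smul_measure _ _
  have hofReal_eq : ∀ y, ENNReal.ofReal (ρ y) = (‖ρ y‖₊ : ENNReal) := fun y => by
    rw [← enorm_eq_nnnorm, ← ofReal_norm_eq_enorm, Real.norm_of_nonneg (hρ_nonneg y)]
  have hρhat_lint : ∫⁻ y, ENNReal.ofReal (ρ y) ∂Phat < ⊤ := by
    simp only [hofReal_eq]
    exact hintM2.hasFiniteIntegral
  have int_ρ_bar : Integrable ρ Pbar := by
    refine ⟨hρ_cont.aestronglyMeasurable, ?_⟩
    show ∫⁻ y, (‖ρ y‖₊ : ENNReal) ∂Pbar < ⊤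
    simp only [← hofReal_eq]
    exact lt_of_le_of_lt lint_le
      (ENNReal.mul_lt_top ENNReal.ofReal_lt_top hρhat_lint)
  have hρbar_le : ∫ y, ρ y ∂Pbar ≤ τ * ∫ y, ρ y ∂Phat := by
    have h0 : (0:ℝ) ≤ τ := le_trans zero_le_one hτ
    rw [integral_eq_lintegral_of_nonneg_ae (ae_of_all _ hρ_nonneg)
      hρ_cont.aestronglyMeasurable,
      integral_eq_lintegral_of_nonneg_ae (ae_of_all _ hρ_nonneg)
      hρ_cont.aestronglyMeasurable,
      ← ENNReal.toReal_ofReal h0, ← ENNReal.toReal_mul]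
    apply ENNReal.toReal_mono
    · exact (ENNReal.mul_lt_top ENNReal.ofReal_lt_top hρhat_lint).ne
    · exact lint_le
  -- positive parts of q are integrable over Pbar
  have habs : ∀ a : ℝ, a + max (-a) 0 = max a 0 := by
    intro a
    rcases le_total a 0 with h | h
    · rw [max_eq_left (neg_nonneg.mpr h), max_eq_right h]; ring
    · rw [max_eq_right (neg_nonpos.mpr h), max_eq_left h]; ring
  have hpos_bound : ∀ n y, α n * max (q n y) 0 ≤ ρ y + ∑ m, α m * max (-(q m y)) 0 := by
    intro n y
    have e1 : (∑ m, α m * q m y) + ∑ m, α m * max (-(q m y)) 0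
        = ∑ m, α m * max (q m y) 0 := by
      rw [← Finset.sum_add_distrib]
      refine Finset.sum_congr rfl fun m _ => ?_
      rw [← mul_add, habs]
    have e2 : α n * max (q n y) 0 ≤ ∑ m, α m * max (q m y) 0 :=
      Finset.single_le_sum (f := fun m => α m * max (q m y) 0)
        (fun m _ => mul_nonneg (hα m).le (le_max_right _ _)) (Finset.mem_univ n)
    have e3 : ∑ m, α m * q m y ≤ ρ y := by
      rw [hr_eq y]; exact le_max_left _ _
    linarith [e1, e2, e3]
  have int_pos_bar : ∀ n, Integrable (fun y => max (q n y) 0) Pbar := by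
    intro n
    have hb : Integrable (fun y => ρ y + ∑ m, α m * max (-(q m y)) 0) Pbar :=
      int_ρ_bar.add (integrable_finset_sum _ fun m _ => ((int_neg_bar m).const_mul (α m)))
    have h1 : Integrable (fun y => α n * max (q n y) 0) Pbar := by
      refine hb.mono' ?_ (ae_of_all _ fun y => ?_)
      · exact (measurable_const.mul
          (((hq_cont n).max continuous_const).measurable)).aestronglyMeasurable
      · rw [Real.norm_eq_abs, abs_of_nonneg (mul_nonneg (hα n).le (le_max_right _ _))]
        exact hpos_bound n y
    have h2 := h1.const_mul (α n)⁻¹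
    have h3 : (fun y => (α n)⁻¹ * (α n * max (q n y) 0)) = fun y => max (q n y) 0 := by
      funext y
      rw [inv_mul_cancel_left₀ (hα n).ne']
    rwa [h3] at h2
  have int_q_bar : ∀ n, Integrable (q n) Pbar := by
    intro n
    have h := (int_pos_bar n).sub (int_neg_bar n)
    refine h.congr (ae_of_all _ fun y => ?_)
    have := habs (q n y)
    simp only [Pi.sub_apply]
    linarith
  have int_qT : ∀ n, Integrable (fun x => q n (gradient (ψs n) x)) (P n) := by
    intro n
    have h := int_q_bar n
    rw [← hpush n] at h
    exact (integrable_map_measure (hq_cont n).aestronglyMeasurable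
      (hTmeas n).aemeasurable).mp h
  have intqT_eq : ∀ n, ∫ x, q n (gradient (ψs n) x) ∂(P n) = ∫ y, q n y ∂Pbar := by
    intro n
    rw [← hpush n, integral_map (hTmeas n).aemeasurable
      ((hq_cont n).aestronglyMeasurable)]
  -- the integral inequalities
  have step1 : ∀ n, ∫ x, (ψs n x - q n (gradient (ψs n) x)) ∂(P n)
      ≤ ∫ x, F n x ∂(P n) := fun n =>
    integral_mono ((hint_s n).sub (int_qT n)) (hFint n) (fun x => key n x)
  have step2 : ∀ n, ∫ x, (ψs n x - q n (gradient (ψs n) x)) ∂(P n)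
      = ∫ x, ψs n x ∂(P n) - ∫ y, q n y ∂Pbar := by
    intro n
    rw [integral_sub (hint_s n) (int_qT n), intqT_eq n]
  have int_r : Integrable (fun y => ∑ n, α n * ψbd n y - ‖y‖ ^ 2 / 2) Pbar := by
    have h := integrable_finset_sum (μ := Pbar) Finset.univ
      (fun n (_ : n ∈ Finset.univ) => ((int_q_bar n).const_mul (α n)))
    refine h.congr (ae_of_all _ fun y => ?_)
    exact hr_eq y
  have step3 : ∑ n, α n * ∫ y, q n y ∂Pbar
      = ∫ y, (∑ n, α n * ψbd n y - ‖y‖ ^ 2 / 2) ∂Pbar := by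
    have h1 : ∀ n, α n * ∫ y, q n y ∂Pbar = ∫ y, α n * q n y ∂Pbar := fun n =>
      (integral_const_mul _ _).symm
    rw [Finset.sum_congr rfl fun n _ => h1 n,
      ← integral_finset_sum _ (fun n _ => ((int_q_bar n).const_mul (α n)))]
    exact integral_congr_ae (ae_of_all _ fun y => hr_eq y)
  have step4 : ∫ y, (∑ n, α n * ψbd n y - ‖y‖ ^ 2 / 2) ∂Pbar ≤ ∫ y, ρ y ∂Pbar :=
    integral_mono int_r int_ρ_bar (fun y => le_max_left _ _)
  -- assembling
  have sumF : ∑ n, α n * ∫ x, F n x ∂(P n)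
      = (∑ n, α n * ∫ x, (⟪x, gradient (ψdag n) x⟫
          - ψbd n (gradient (ψdag n) x)) ∂(P n))
        + lam * ∑ n, α n * ∫ x, ‖gradient (ψbd n) (gradient (ψdag n) x) - x‖ ^ 2 ∂(P n) := by
    have h1 : ∀ n, ∫ x, F n x ∂(P n)
        = (∫ x, (⟪x, gradient (ψdag n) x⟫ - ψbd n (gradient (ψdag n) x)) ∂(P n))
          + lam * ∫ x, ‖gradient (ψbd n) (gradient (ψdag n) x) - x‖ ^ 2 ∂(P n) := by
      intro n
      rw [hFdef]
      rw [integral_add (hintM1 n) ((hintM3 n).const_mul lam)]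
      congr 1
      exact integral_const_mul _ _
    rw [Finset.sum_congr rfl fun n _ => by rw [h1 n]]
    rw [Finset.mul_sum, ← Finset.sum_add_distrib]
    refine Finset.sum_congr rfl fun n _ => ?_
    ring
  have main : ∀ n, ∫ x, ψs n x ∂(P n) - ∫ y, q n y ∂Pbar ≤ ∫ x, F n x ∂(P n) :=
    fun n => (step2 n) ▸ step1 n
  have sum_le : ∑ n, α n * (∫ x, ψs n x ∂(P n) - ∫ y, q n y ∂Pbar)
      ≤ ∑ n, α n * ∫ x, F n x ∂(P n) :=
    Finset.sum_le_sum fun n _ => mul_le_mul_of_nonneg_left (main n) (hα n).le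
  have expand : ∑ n, α n * (∫ x, ψs n x ∂(P n) - ∫ y, q n y ∂Pbar)
      = (∑ n, α n * ∫ x, ψs n x ∂(P n)) - ∑ n, α n * ∫ y, q n y ∂Pbar := by
    rw [← Finset.sum_sub_distrib]
    exact Finset.sum_congr rfl fun n _ => by ring
  have hM' : M = (∑ n, α n * ∫ x, F n x ∂(P n)) + τ * ∫ y, ρ y ∂Phat := by
    rw [hM, sumF]; ring
  rw [hM', ge_iff_le]
  have hkey2 : (∑ n, α n * ∫ x, ψs n x ∂(P n)) - ∫ y, ρ y ∂Pbar
      ≤ ∑ n, α n * ∫ x, F n x ∂(P n) := by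
    calc (∑ n, α n * ∫ x, ψs n x ∂(P n)) - ∫ y, ρ y ∂Pbar
        ≤ (∑ n, α n * ∫ x, ψs n x ∂(P n)) - ∑ n, α n * ∫ y, q n y ∂Pbar := by
          linarith [step3, step4]
      _ = ∑ n, α n * (∫ x, ψs n x ∂(P n) - ∫ y, q n y ∂Pbar) := expand.symm
      _ ≤ ∑ n, α n * ∫ x, F n x ∂(P n) := sum_le
  linarith [hkey2, hρbar_le]
end

section
/- Theorem 2, part 2 (L² error bound, the quantity that upper-bounds W₂²(∇ψₙ†♯Pₙ, P̄) in inequality (11)). Under the hypotheses of Theorem 2, part 1 (optimal congruent potentials {ψₙ*}; ψₙ† differentiable convex; ψ̄ₙ‡ β-strongly convex and B-smooth with 0 < β ≤ B < ∞, differentiable conjugates ψₙ‡ with mutually inverse gradients; λ > B/(2β²); τ ≥ 1 and P̄ ≤ τ·P̂ setwise; M the regularized objective), set Δ = M − Σₙ αₙ ∫ ψₙ* dPₙ. Then for every n ∈ {1,…,N}: ∫ ‖∇ψₙ†(x) − ∇ψₙ*(x)‖² dPₙ(x) ≤ (2Δ/αₙ) · (√(1/β) + √(1/(λβ² − B/2)))².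 -/
open MeasureTheory RealInnerProductSpace

set_option linter.unusedSectionVars false
set_option maxHeartbeats 2000000

section AuxConvex

variable {F : Type*} [NormedAddCommGroup F] [InnerProductSpace ℝ F] [CompleteSpace F]

lemma grad_inner_eq_fderiv (f : F → ℝ) (x v : F) :
    ⟪gradient f x, v⟫ = fderiv ℝ f x v :=
  InnerProductSpace.toDual_symm_apply

/-- Gradient inequality for differentiable convex functions. -/
lemma convex_grad_ineq {f : F → ℝ} (hconv : ConvexOn ℝ Set.univ f)
    (hdiff : Differentiable ℝ f) (x y : F) :
    f x + ⟪gradient f x, y - x⟫ ≤ f y := by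
  set g : ℝ → ℝ := fun t => f (AffineMap.lineMap x y t) with hg
  have hgconv : ConvexOn ℝ Set.univ g := by
    have := hconv.comp_affineMap (AffineMap.lineMap x y)
    rw [Set.preimage_univ] at this
    exact this
  have hline : ∀ t : ℝ, HasDerivAt (fun t : ℝ => AffineMap.lineMap x y t) (y - x) t := by
    intro t
    have h1 : HasDerivAt (fun t : ℝ => t • (y - x) + x) ((1 : ℝ) • (y - x)) t :=
      ((hasDerivAt_id t).smul_const (y - x)).add_const x
    simp only [one_smul] at h1
    refine h1.congr_of_eventuallyEq ?_
    filter_upwards with s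
    simp [AffineMap.lineMap_apply_module']
  have hgd : HasDerivAt g (⟪gradient f x, y - x⟫) 0 := by
    have hc := (hdiff (AffineMap.lineMap x y (0:ℝ))).hasFDerivAt.comp_hasDerivAt 0 (hline 0)
    simp only [AffineMap.lineMap_apply_zero] at hc
    rw [grad_inner_eq_fderiv]
    exact hc
  have key := hgconv.le_slope_of_hasDerivAt (Set.mem_univ (0:ℝ)) (Set.mem_univ (1:ℝ))
    zero_lt_one hgd
  rw [slope_def_field] at key
  simp only [hg, AffineMap.lineMap_apply_zero, AffineMap.lineMap_apply_one, sub_zero,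
    div_one] at key
  linarith

/-- Strong convexity Bregman lower bound. -/
lemma sconv_bregman {b : F → ℝ} (hbd : Differentiable ℝ b) {β : ℝ} (hβ : 0 < β)
    (hsc : ConvexOn ℝ Set.univ (fun y => b y - β / 2 * ‖y‖ ^ 2)) (z y : F) :
    b z + ⟪gradient b z, y - z⟫ + β / 2 * ‖y - z‖ ^ 2 ≤ b y := by
  set φ : F → ℝ := fun y => b y - β / 2 * ‖y‖ ^ 2 with hφ
  have hnsq : Differentiable ℝ (fun y : F => ‖y‖ ^ 2) :=
    (contDiff_norm_sq ℝ (n := 1)).differentiable one_ne_zero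
  have hφd : Differentiable ℝ φ := hbd.sub (hnsq.const_mul (β / 2))
  have hfd : HasFDerivAt φ
      ((InnerProductSpace.toDual ℝ F (gradient b z) : F →L[ℝ] ℝ)
        - (β / 2) • (2 • (innerSL ℝ z))) z := by
    have h1 : HasFDerivAt b (InnerProductSpace.toDual ℝ F (gradient b z) : F →L[ℝ] ℝ) z :=
      (hbd z).hasGradientAt.hasFDerivAt
    have h2 : HasFDerivAt (fun y : F => β / 2 * ‖y‖ ^ 2)
        ((β / 2) • (2 • (innerSL ℝ z))) z := by
      have := ((hasStrictFDerivAt_norm_sq z).hasFDerivAt).const_mul (β / 2)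
      simpa [smul_eq_mul] using this
    exact h1.sub h2
  have hinner : ∀ v : F, ⟪gradient φ z, v⟫ = ⟪gradient b z, v⟫ - β * ⟪z, v⟫ := by
    intro v
    rw [grad_inner_eq_fderiv, hfd.fderiv]
    simp only [ContinuousLinearMap.sub_apply, ContinuousLinearMap.smul_apply,
      InnerProductSpace.toDual_apply_apply, innerSL_apply_apply, smul_eq_mul]
    ring
  have key := convex_grad_ineq hsc hφd z y
  simp only [hφ] at key
  rw [hinner] at key
  have hexp : ‖y - z‖ ^ 2 = ‖y‖ ^ 2 - 2 * ⟪y, z⟫ + ‖z‖ ^ 2 := by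
    rw [← real_inner_self_eq_norm_sq, ← real_inner_self_eq_norm_sq, ← real_inner_self_eq_norm_sq]
    simp only [inner_sub_left, inner_sub_right, real_inner_comm z y]
    ring
  have hzy : ⟪z, y - z⟫ = ⟪y, z⟫ - ‖z‖ ^ 2 := by
    rw [inner_sub_right, ← real_inner_self_eq_norm_sq, real_inner_comm z y]
  nlinarith [key]

/-- Fenchel equality along the gradient for differentiable convex functions. -/
lemma conj_grad_eq {ψ ψb : F → ℝ} (hconv : ConvexOn ℝ Set.univ ψ)
    (hdiff : Differentiable ℝ ψ)
    (hconj : ∀ y, IsLUB (Set.range fun x => ⟪x, y⟫ - ψ x) (ψb y)) (x : F) :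
    ψb (gradient ψ x) = ⟪x, gradient ψ x⟫ - ψ x := by
  refine le_antisymm ?_ ((hconj (gradient ψ x)).1 ⟨x, rfl⟩)
  refine (hconj (gradient ψ x)).2 ?_
  rintro _ ⟨z, rfl⟩
  have h := convex_grad_ineq hconv hdiff x z
  have : ⟪gradient ψ x, z - x⟫ = ⟪z, gradient ψ x⟫ - ⟪x, gradient ψ x⟫ := by
    rw [inner_sub_right, real_inner_comm]
    congr 1
    exact real_inner_comm _ _
  simp only [this] at h
  show ⟪z, gradient ψ x⟫ - ψ z ≤ ⟪x, gradient ψ x⟫ - ψ x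
  linarith

lemma amgm_inner (β : ℝ) (hβ : 0 < β) (a c : F) :
    ⟪a, c⟫ ≤ β / 2 * ‖a‖ ^ 2 + 1 / (2 * β) * ‖c‖ ^ 2 := by
  have h1 : ⟪a, c⟫ ≤ ‖a‖ * ‖c‖ := real_inner_le_norm a c
  have h3 : (0:ℝ) < 2 * β := by linarith
  have key : 2 * β * ⟪a, c⟫ ≤ β ^ 2 * ‖a‖ ^ 2 + ‖c‖ ^ 2 := by
    nlinarith [sq_nonneg (β * ‖a‖ - ‖c‖), mul_le_mul_of_nonneg_left h1 (le_of_lt h3)]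
  have h4 : β / 2 * ‖a‖ ^ 2 + 1 / (2 * β) * ‖c‖ ^ 2 - ⟪a, c⟫
      = (β ^ 2 * ‖a‖ ^ 2 + ‖c‖ ^ 2 - 2 * β * ⟪a, c⟫) / (2 * β) := by
    field_simp
  have h5 : (0:ℝ) ≤ (β ^ 2 * ‖a‖ ^ 2 + ‖c‖ ^ 2 - 2 * β * ⟪a, c⟫) / (2 * β) :=
    div_nonneg (by linarith) (le_of_lt h3)
  linarith

/-- Fenchel equality for the conjugate `d` of `b` at points of the form `x = ∇b(∇d x)`. -/
lemma conj_self_eq {b d : F → ℝ} (hbconv : ConvexOn ℝ Set.univ b)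
    (hbd : Differentiable ℝ b)
    (hconj : ∀ x, IsLUB (Set.range fun y => ⟪y, x⟫ - b y) (d x))
    (hinv1 : ∀ x, gradient b (gradient d x) = x) (x : F) :
    d x = ⟪gradient d x, x⟫ - b (gradient d x) := by
  have h := conj_grad_eq hbconv hbd hconj (gradient d x)
  rwa [hinv1 x] at h

/-- Bregman-type lower bound from strong convexity. -/
lemma breg_lower {b d : F → ℝ} (hbconv : ConvexOn ℝ Set.univ b)
    (hbd : Differentiable ℝ b) {β : ℝ} (hβ : 0 < β)
    (hsc : ConvexOn ℝ Set.univ (fun y => b y - β / 2 * ‖y‖ ^ 2))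
    (hconj : ∀ x, IsLUB (Set.range fun y => ⟪y, x⟫ - b y) (d x))
    (hinv1 : ∀ x, gradient b (gradient d x) = x) (x w : F) :
    β / 2 * ‖w - gradient d x‖ ^ 2 ≤ d x - ⟪w, x⟫ + b w := by
  have hdx := conj_self_eq hbconv hbd hconj hinv1 x
  have hb := sconv_bregman hbd hβ hsc (gradient d x) w
  rw [hinv1 x] at hb
  have h1 : ⟪x, w - gradient d x⟫ = ⟪x, w⟫ - ⟪x, gradient d x⟫ := inner_sub_right x w _
  have h2 : ⟪w, x⟫ = ⟪x, w⟫ := real_inner_comm x w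
  have h3 : ⟪gradient d x, x⟫ = ⟪x, gradient d x⟫ := real_inner_comm x _
  linarith

/-- Bregman-type upper bound for the conjugate. -/
lemma breg_upper {b d : F → ℝ} (hbd : Differentiable ℝ b) {β : ℝ} (hβ : 0 < β)
    (hsc : ConvexOn ℝ Set.univ (fun y => b y - β / 2 * ‖y‖ ^ 2))
    (hconj : ∀ x, IsLUB (Set.range fun y => ⟪y, x⟫ - b y) (d x)) (x p : F) :
    d x + b p - ⟪p, x⟫ ≤ 1 / (2 * β) * ‖gradient b p - x‖ ^ 2 := by
  have key : d x ≤ ⟪p, x⟫ - b p + 1 / (2 * β) * ‖gradient b p - x‖ ^ 2 := by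
    refine (hconj x).2 ?_
    rintro _ ⟨y, rfl⟩
    show ⟪y, x⟫ - b y ≤ _
    have hb := sconv_bregman hbd hβ hsc p y
    have ham := amgm_inner β hβ (y - p) (x - gradient b p)
    have e1 : ⟪y - p, x - gradient b p⟫
        = ⟪y, x⟫ - ⟪y, gradient b p⟫ - ⟪p, x⟫ + ⟪p, gradient b p⟫ := by
      simp only [inner_sub_left, inner_sub_right]
      ring
    have e2 : ⟪gradient b p, y - p⟫ = ⟪gradient b p, y⟫ - ⟪gradient b p, p⟫ :=
      inner_sub_right _ _ _
    have e3 : ⟪y, gradient b p⟫ = ⟪gradient b p, y⟫ := real_inner_comm _ _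
    have e4 : ⟪p, gradient b p⟫ = ⟪gradient b p, p⟫ := real_inner_comm _ _
    have e5 : ‖x - gradient b p‖ ^ 2 = ‖gradient b p - x‖ ^ 2 := by rw [norm_sub_rev]
    rw [e5] at ham
    linarith
  linarith


end AuxConvex

lemma measurable_gradient'_s5 {F : Type*} [NormedAddCommGroup F] [InnerProductSpace ℝ F]
    [CompleteSpace F] [MeasurableSpace F] [BorelSpace F] (f : F → ℝ) :
    Measurable (gradient f) :=
  ((InnerProductSpace.toDual ℝ F).symm.continuous.measurable).comp (measurable_fderiv ℝ f)

/-- Theorem 2, part 2 (L² error bound, inequality (11)): with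
`Δ = M − Σₙ αₙ ∫ ψₙ* dPₙ`, for every `n`,
`∫ ‖∇ψₙ†(x) − ∇ψₙ*(x)‖² dPₙ(x) ≤ (2Δ/αₙ)(√(1/β) + √(1/(λβ² − B/2)))²`. -/
theorem theorem2_L2_error_bound {D N : ℕ}
    (P : Fin N → Measure (EuclideanSpace ℝ (Fin D)))
    (Pbar : Measure (EuclideanSpace ℝ (Fin D)))
    [∀ n, IsProbabilityMeasure (P n)] [IsProbabilityMeasure Pbar]
    (α : Fin N → ℝ) (hα : ∀ n, 0 < α n) (hαsum : ∑ n, α n = 1)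
    -- optimal congruent potentials ψₙ* with conjugates ψ̄ₙ*
    (ψs ψbs : Fin N → EuclideanSpace ℝ (Fin D) → ℝ)
    (hψs_conv : ∀ n, ConvexOn ℝ Set.univ (ψs n))
    (hψs_diff : ∀ n, Differentiable ℝ (ψs n))
    (hψbs_diff : ∀ n, Differentiable ℝ (ψbs n))
    (hψbs_conj : ∀ n y, IsLUB (Set.range fun x => ⟪x, y⟫ - ψs n x) (ψbs n y))
    (hpush : ∀ n, (P n).map (gradient (ψs n)) = Pbar)
    (hsinv : ∀ n x, gradient (ψbs n) (gradient (ψs n) x) = x)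
    (hcong : ∀ y, ∑ n, α n * ψbs n y = ‖y‖ ^ 2 / 2)
    (hcongGrad : ∀ y, ∑ n, α n • gradient (ψbs n) y = y)
    -- candidate potentials ψₙ† and ψ̄ₙ‡ with conjugates ψₙ‡
    (β B : ℝ) (hβ : 0 < β) (hβB : β ≤ B)
    (ψdag ψbd ψd : Fin N → EuclideanSpace ℝ (Fin D) → ℝ)
    (hψdag_conv : ∀ n, ConvexOn ℝ Set.univ (ψdag n))
    (hψdag_diff : ∀ n, Differentiable ℝ (ψdag n))
    (hψbd_conv : ∀ n, ConvexOn ℝ Set.univ (ψbd n))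
    (hψbd_diff : ∀ n, Differentiable ℝ (ψbd n))
    (hψbd_sconv : ∀ n, ConvexOn ℝ Set.univ (fun y => ψbd n y - β / 2 * ‖y‖ ^ 2))
    (hψbd_smooth : ∀ n x y, ‖gradient (ψbd n) x - gradient (ψbd n) y‖ ≤ B * ‖x - y‖)
    (hψd_diff : ∀ n, Differentiable ℝ (ψd n))
    (hψd_conj : ∀ n x, IsLUB (Set.range fun y => ⟪y, x⟫ - ψbd n y) (ψd n x))
    (hψd_lip : ∀ n x y, ‖gradient (ψd n) x - gradient (ψd n) y‖ ≤ (1 / β) * ‖x - y‖)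
    (hinv1 : ∀ n x, gradient (ψbd n) (gradient (ψd n) x) = x)
    (hinv2 : ∀ n y, gradient (ψd n) (gradient (ψbd n) y) = y)
    -- regularization parameters
    (lam : ℝ) (hlam : lam > B / (2 * β ^ 2))
    (τ : ℝ) (hτ : 1 ≤ τ)
    (Phat : Measure (EuclideanSpace ℝ (Fin D))) [IsProbabilityMeasure Phat]
    (hdom : ∀ A : Set (EuclideanSpace ℝ (Fin D)), MeasurableSet A →
      Pbar A ≤ ENNReal.ofReal τ * Phat A)
    -- integrability of the stated integrals
    (hintM1 : ∀ n, Integrable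
      (fun x => ⟪x, gradient (ψdag n) x⟫ - ψbd n (gradient (ψdag n) x)) (P n))
    (hintM2 : Integrable (fun y => max (∑ n, α n * ψbd n y - ‖y‖ ^ 2 / 2) 0) Phat)
    (hintM3 : ∀ n, Integrable
      (fun x => ‖gradient (ψbd n) (gradient (ψdag n) x) - x‖ ^ 2) (P n))
    (hint_s : ∀ n, Integrable (ψs n) (P n))
    -- the regularized objective
    (M : ℝ)
    (hM : M = (∑ n, α n * ∫ x, (⟪x, gradient (ψdag n) x⟫
          - ψbd n (gradient (ψdag n) x)) ∂(P n))
      + τ * ∫ y, max (∑ n, α n * ψbd n y - ‖y‖ ^ 2 / 2) 0 ∂Phat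
      + lam * ∑ n, α n * ∫ x, ‖gradient (ψbd n) (gradient (ψdag n) x) - x‖ ^ 2 ∂(P n))
    (hint_dev : ∀ n, Integrable
      (fun x => ‖gradient (ψdag n) x - gradient (ψs n) x‖ ^ 2) (P n))
    (Δ : ℝ) (hΔ : Δ = M - ∑ n, α n * ∫ x, ψs n x ∂(P n)) :
    ∀ n, ∫ x, ‖gradient (ψdag n) x - gradient (ψs n) x‖ ^ 2 ∂(P n) ≤
      (2 * Δ / α n) *
        (Real.sqrt (1 / β) + Real.sqrt (1 / (lam * β ^ 2 - B / 2))) ^ 2 := by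
  intro m
  have hβ2 : (0:ℝ) < β ^ 2 := by positivity
  have hc2 : (0:ℝ) < lam * β ^ 2 - B / 2 := by
    rw [gt_iff_lt, div_lt_iff₀ (by positivity)] at hlam
    nlinarith
  have hlam0 : (0:ℝ) < lam := by nlinarith [hβ.le]
  have hlam' : 1 / (2 * β) ≤ lam := by
    rw [gt_iff_lt, div_lt_iff₀ (by positivity)] at hlam
    rw [div_le_iff₀ (by positivity)]
    nlinarith
  have hτ0 : (0 : ℝ) ≤ τ := le_trans zero_le_one hτ
  -- measurability
  have hmT : ∀ n, Measurable (fun x => gradient (ψs n) x) := fun n => measurable_gradient'_s5 (ψs n)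
  have hmG : ∀ n, Measurable (fun x => gradient (ψdag n) x) := fun n => measurable_gradient'_s5 (ψdag n)
  have hmu : ∀ n, Measurable (fun x => gradient (ψd n) x) := fun n => measurable_gradient'_s5 (ψd n)
  have hmb : ∀ n, Measurable (gradient (ψbd n)) := fun n => measurable_gradient'_s5 (ψbd n)
  have hmbg : ∀ n, Measurable (fun x => gradient (ψbd n) (gradient (ψdag n) x)) := fun n => (hmb n).comp (hmG n)
  have hmH : ∀ n, Measurable (fun y => (ψbs n y - ψbd n y)) :=
    fun n => ((hψbs_diff n).continuous.sub (hψbd_diff n).continuous).measurable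
  have hmS : Measurable (fun y : EuclideanSpace ℝ (Fin D) => (∑ k, α k * ψbd k y - ‖y‖ ^ 2 / 2)) := by
    apply Measurable.sub
    · exact Finset.measurable_sum _ fun k _ => ((hψbd_diff k).continuous.measurable.const_mul _)
    · exact (measurable_norm.pow_const 2).div_const 2
  -- pointwise facts
  have hψs_eq : ∀ n x, ψs n x = ⟪x, gradient (ψs n) x⟫ - ψbs n (gradient (ψs n) x) := by
    intro n x
    have hc : ψbs n (gradient (ψs n) x) = ⟪x, gradient (ψs n) x⟫ - ψs n x :=
      conj_grad_eq (hψs_conv n) (hψs_diff n) (hψbs_conj n) x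
    linarith
  have hLip : ∀ n x, ‖gradient (ψdag n) x - gradient (ψd n) x‖ ≤ (1 / β) * ‖gradient (ψbd n) (gradient (ψdag n) x) - x‖ := by
    intro n x
    have h0 : ‖gradient (ψd n) (gradient (ψbd n) (gradient (ψdag n) x)) - gradient (ψd n) x‖ ≤ (1 / β) * ‖gradient (ψbd n) (gradient (ψdag n) x) - x‖ :=
      hψd_lip n (gradient (ψbd n) (gradient (ψdag n) x)) x
    have h1 : gradient (ψd n) (gradient (ψbd n) (gradient (ψdag n) x)) = gradient (ψdag n) x := hinv2 n (gradient (ψdag n) x)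
    rw [h1] at h0
    exact h0
  have hNZ : ∀ n x, β ^ 2 * ‖gradient (ψdag n) x - gradient (ψd n) x‖ ^ 2 ≤ ‖gradient (ψbd n) (gradient (ψdag n) x) - x‖ ^ 2 := by
    intro n x
    have hl := hLip n x
    have h2 := mul_le_mul hl hl (norm_nonneg _) (by positivity)
    have hββ : β ^ 2 * ((1/β) * (1/β)) = 1 := by field_simp
    nlinarith [norm_nonneg (gradient (ψbd n) (gradient (ψdag n) x) - x), sq_nonneg (‖gradient (ψbd n) (gradient (ψdag n) x) - x‖)]
  have hq0 : ∀ n x, (0:ℝ) ≤ (β / 2 * ‖gradient (ψs n) x - gradient (ψd n) x‖ ^ 2 + (lam * β ^ 2 - B / 2) * ‖gradient (ψdag n) x - gradient (ψd n) x‖ ^ 2) := by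
    intro n x
    exact add_nonneg (by positivity) (mul_nonneg hc2.le (by positivity))
  have hP : ∀ n x, (ψbs n (gradient (ψs n) x) - ψbd n (gradient (ψs n) x)) ≤ ((⟪x, gradient (ψdag n) x⟫ - ψbd n (gradient (ψdag n) x)) - ψs n x + lam * ‖gradient (ψbd n) (gradient (ψdag n) x) - x‖ ^ 2) - (β / 2 * ‖gradient (ψs n) x - gradient (ψd n) x‖ ^ 2 + (lam * β ^ 2 - B / 2) * ‖gradient (ψdag n) x - gradient (ψd n) x‖ ^ 2) := by
    intro n x
    have hE : β / 2 * ‖gradient (ψs n) x - gradient (ψd n) x‖ ^ 2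
        ≤ ψd n x - ⟪gradient (ψs n) x, x⟫ + ψbd n (gradient (ψs n) x) :=
      breg_lower (hψbd_conv n) (hψbd_diff n) hβ (hψbd_sconv n) (hψd_conj n)
        (hinv1 n) x (gradient (ψs n) x)
    have hD : ψd n x + ψbd n (gradient (ψdag n) x) - ⟪gradient (ψdag n) x, x⟫
        ≤ 1 / (2 * β) * ‖gradient (ψbd n) (gradient (ψdag n) x) - x‖ ^ 2 :=
      breg_upper (hψbd_diff n) hβ (hψbd_sconv n) (hψd_conj n) x (gradient (ψdag n) x)
    have hnz := hNZ n x
    have e1 : ⟪x, gradient (ψdag n) x⟫ = ⟪gradient (ψdag n) x, x⟫ := real_inner_comm _ _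
    have e2 : ⟪x, gradient (ψs n) x⟫ = ⟪gradient (ψs n) x, x⟫ := real_inner_comm _ _
    have hψx := hψs_eq n x
    have hN0 : (0:ℝ) ≤ ‖gradient (ψbd n) (gradient (ψdag n) x) - x‖ ^ 2 := by positivity
    have hZ0 : (0:ℝ) ≤ ‖gradient (ψdag n) x - gradient (ψd n) x‖ ^ 2 := by positivity
    have key : (lam - 1/(2*β)) * (β^2 * ‖gradient (ψdag n) x - gradient (ψd n) x‖ ^ 2)
        ≤ (lam - 1/(2*β)) * ‖gradient (ψbd n) (gradient (ψdag n) x) - x‖ ^ 2 :=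
      mul_le_mul_of_nonneg_left hnz (by linarith)
    have hfld : (lam - 1/(2*β)) * β^2 = lam * β^2 - β/2 := by field_simp
    have key2 : (lam * β ^ 2 - β / 2) * ‖gradient (ψdag n) x - gradient (ψd n) x‖ ^ 2
        ≤ (lam - 1/(2*β)) * ‖gradient (ψbd n) (gradient (ψdag n) x) - x‖ ^ 2 := by
      rw [← hfld, mul_assoc]
      exact key
    have key3 : (lam * β ^ 2 - B / 2) * ‖gradient (ψdag n) x - gradient (ψd n) x‖ ^ 2
        ≤ lam * ‖gradient (ψbd n) (gradient (ψdag n) x) - x‖ ^ 2 - 1/(2*β) * ‖gradient (ψbd n) (gradient (ψdag n) x) - x‖ ^ 2 := by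
      have h1 : (lam * β ^ 2 - B / 2) * ‖gradient (ψdag n) x - gradient (ψd n) x‖ ^ 2
          ≤ (lam * β ^ 2 - β / 2) * ‖gradient (ψdag n) x - gradient (ψd n) x‖ ^ 2 :=
        mul_le_mul_of_nonneg_right (by linarith) hZ0
      have h2 : (lam - 1/(2*β)) * ‖gradient (ψbd n) (gradient (ψdag n) x) - x‖ ^ 2
          = lam * ‖gradient (ψbd n) (gradient (ψdag n) x) - x‖ ^ 2 - 1/(2*β) * ‖gradient (ψbd n) (gradient (ψdag n) x) - x‖ ^ 2 := by ring
      linarith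
    linarith
  -- integrability of the components
  have hintY : ∀ n, Integrable (fun x => ‖gradient (ψdag n) x - gradient (ψd n) x‖ ^ 2) (P n) := by
    intro n
    refine Integrable.mono' ((hintM3 n).const_mul (1/β^2))
      ((((hmG n).sub (hmu n)).norm.pow_const 2).aestronglyMeasurable)
      (ae_of_all _ fun x => ?_)
    show ‖‖gradient (ψdag n) x - gradient (ψd n) x‖ ^ 2‖ ≤ 1/β^2 * ‖gradient (ψbd n) (gradient (ψdag n) x) - x‖ ^ 2
    rw [Real.norm_eq_abs, abs_of_nonneg (by positivity)]
    have hnz := hNZ n x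
    have e : (1:ℝ)/β^2 * ‖gradient (ψbd n) (gradient (ψdag n) x) - x‖ ^ 2 = ‖gradient (ψbd n) (gradient (ψdag n) x) - x‖ ^ 2 / β^2 := by ring
    rw [e, le_div_iff₀ hβ2]
    linarith
  have hintX : ∀ n, Integrable (fun x => ‖gradient (ψs n) x - gradient (ψd n) x‖ ^ 2) (P n) := by
    intro n
    refine Integrable.mono'
      (((hint_dev n).const_mul 2).add ((hintY n).const_mul 2))
      ((((hmT n).sub (hmu n)).norm.pow_const 2).aestronglyMeasurable)
      (ae_of_all _ fun x => ?_)
    show ‖‖gradient (ψs n) x - gradient (ψd n) x‖ ^ 2‖ ≤ 2 * ‖gradient (ψdag n) x - gradient (ψs n) x‖ ^ 2 + 2 * ‖gradient (ψdag n) x - gradient (ψd n) x‖ ^ 2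
    rw [Real.norm_eq_abs, abs_of_nonneg (by positivity)]
    have h1 : ‖gradient (ψs n) x - gradient (ψd n) x‖ ≤ ‖gradient (ψs n) x - gradient (ψdag n) x‖ + ‖gradient (ψdag n) x - gradient (ψd n) x‖ := by
      have h0 := norm_add_le (gradient (ψs n) x - gradient (ψdag n) x) (gradient (ψdag n) x - gradient (ψd n) x)
      rw [sub_add_sub_cancel] at h0
      exact h0
    have h2 : ‖gradient (ψs n) x - gradient (ψdag n) x‖ = ‖gradient (ψdag n) x - gradient (ψs n) x‖ := norm_sub_rev _ _
    rw [h2] at h1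
    nlinarith [norm_nonneg (gradient (ψs n) x - gradient (ψd n) x), norm_nonneg (gradient (ψdag n) x - gradient (ψs n) x),
      norm_nonneg (gradient (ψdag n) x - gradient (ψd n) x),
      sq_nonneg (‖gradient (ψdag n) x - gradient (ψs n) x‖ - ‖gradient (ψdag n) x - gradient (ψd n) x‖)]
  have hintq : ∀ n, Integrable (fun x => (β / 2 * ‖gradient (ψs n) x - gradient (ψd n) x‖ ^ 2 + (lam * β ^ 2 - B / 2) * ‖gradient (ψdag n) x - gradient (ψd n) x‖ ^ 2)) (P n) := fun n =>
    ((hintX n).const_mul _).add ((hintY n).const_mul _)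
  have hgint : ∀ n, Integrable (fun x => ((⟪x, gradient (ψdag n) x⟫ - ψbd n (gradient (ψdag n) x)) - ψs n x + lam * ‖gradient (ψbd n) (gradient (ψdag n) x) - x‖ ^ 2)) (P n) := fun n =>
    ((hintM1 n).sub (hint_s n)).add ((hintM3 n).const_mul lam)
  -- measure domination
  have hle : Pbar ≤ (ENNReal.ofReal τ) • Phat := by
    refine Measure.le_iff.mpr fun A hA => ?_
    rw [Measure.smul_apply, smul_eq_mul]
    exact hdom A hA
  have hsplusPhat : Integrable (fun y => max ((∑ k, α k * ψbd k y - ‖y‖ ^ 2 / 2)) 0) Phat := hintM2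
  have hsplusPbar : Integrable (fun y => max ((∑ k, α k * ψbd k y - ‖y‖ ^ 2 / 2)) 0) Pbar := by
    constructor
    · exact (hmS.max measurable_const).aestronglyMeasurable
    · refine (hasFiniteIntegral_iff_ofReal (f := fun y => max ((∑ k, α k * ψbd k y - ‖y‖ ^ 2 / 2)) 0)
        (ae_of_all _ fun y => le_max_right _ _)).mpr ?_
      have hb := (hasFiniteIntegral_iff_ofReal (f := fun y => max ((∑ k, α k * ψbd k y - ‖y‖ ^ 2 / 2)) 0)
        (ae_of_all _ fun y => le_max_right _ _)).mp hsplusPhat.2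
      calc ∫⁻ y, ENNReal.ofReal (max ((∑ k, α k * ψbd k y - ‖y‖ ^ 2 / 2)) 0) ∂Pbar
          ≤ ∫⁻ y, ENNReal.ofReal (max ((∑ k, α k * ψbd k y - ‖y‖ ^ 2 / 2)) 0) ∂((ENNReal.ofReal τ) • Phat) :=
            lintegral_mono' hle le_rfl
        _ = ENNReal.ofReal τ * ∫⁻ y, ENNReal.ofReal (max ((∑ k, α k * ψbd k y - ‖y‖ ^ 2 / 2)) 0) ∂Phat :=
            lintegral_smul_measure _ _
        _ < ⊤ := ENNReal.mul_lt_top ENNReal.ofReal_lt_top hb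
  have hhTplus : ∀ n, Integrable (fun x => max ((ψbs n (gradient (ψs n) x) - ψbd n (gradient (ψs n) x))) 0) (P n) := by
    intro n
    refine Integrable.mono' (hgint n).abs
      ((((hmH n).comp (hmT n)).max measurable_const).aestronglyMeasurable)
      (ae_of_all _ fun x => ?_)
    show ‖max ((ψbs n (gradient (ψs n) x) - ψbd n (gradient (ψs n) x))) 0‖ ≤ |((⟪x, gradient (ψdag n) x⟫ - ψbd n (gradient (ψdag n) x)) - ψs n x + lam * ‖gradient (ψbd n) (gradient (ψdag n) x) - x‖ ^ 2)|
    rw [Real.norm_eq_abs, abs_of_nonneg (le_max_right _ _)]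
    have h0 : (ψbs n (gradient (ψs n) x) - ψbd n (gradient (ψs n) x)) ≤ ((⟪x, gradient (ψdag n) x⟫ - ψbd n (gradient (ψdag n) x)) - ψs n x + lam * ‖gradient (ψbd n) (gradient (ψdag n) x) - x‖ ^ 2) := le_trans (hP n x) (by have := hq0 n x; linarith)
    exact max_le (le_trans h0 (le_abs_self _)) (abs_nonneg _)
  have hhplusPbar : ∀ n, Integrable (fun y => max ((ψbs n y - ψbd n y)) 0) Pbar := by
    intro n
    rw [← hpush n]
    exact (integrable_map_measure (((hmH n).max measurable_const).aestronglyMeasurable)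
      (hmT n).aemeasurable).mpr (hhTplus n)
  have hsum : ∀ y, ∑ k, α k * (ψbs k y - ψbd k y) = ‖y‖ ^ 2 / 2 - ∑ k, α k * ψbd k y := by
    intro y
    simp only [mul_sub]
    rw [Finset.sum_sub_distrib, hcong y]
  have hhPbar : ∀ n, Integrable (fun y => (ψbs n y - ψbd n y)) Pbar := by
    intro n
    have hBB : Integrable (fun y => max ((ψbs n y - ψbd n y)) 0
        + (1/α n) * (max ((∑ k, α k * ψbd k y - ‖y‖ ^ 2 / 2)) 0 + ∑ k, α k * max ((ψbs k y - ψbd k y)) 0)) Pbar :=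
      (hhplusPbar n).add ((hsplusPbar.add (integrable_finset_sum _
        fun k _ => (hhplusPbar k).const_mul (α k))).const_mul _)
    refine Integrable.mono' hBB (hmH n).aestronglyMeasurable (ae_of_all _ fun y => ?_)
    show ‖(ψbs n y - ψbd n y)‖ ≤ max ((ψbs n y - ψbd n y)) 0
        + (1/α n) * (max ((∑ k, α k * ψbd k y - ‖y‖ ^ 2 / 2)) 0 + ∑ k, α k * max ((ψbs k y - ψbd k y)) 0)
    rw [Real.norm_eq_abs, abs_le]
    have h1 : α n * (ψbs n y - ψbd n y) + ∑ k ∈ Finset.univ.erase n, α k * (ψbs k y - ψbd k y)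
        = ‖y‖ ^ 2 / 2 - ∑ k, α k * ψbd k y := by
      rw [← hsum y, Finset.add_sum_erase Finset.univ (fun k => α k * (ψbs k y - ψbd k y))
        (Finset.mem_univ n)]
    have h2 : ∑ k ∈ Finset.univ.erase n, α k * (ψbs k y - ψbd k y) ≤ ∑ k, α k * max ((ψbs k y - ψbd k y)) 0 := by
      have h2a : ∑ k ∈ Finset.univ.erase n, α k * (ψbs k y - ψbd k y)
          ≤ ∑ k ∈ Finset.univ.erase n, α k * max ((ψbs k y - ψbd k y)) 0 :=
        Finset.sum_le_sum fun k _ =>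
          mul_le_mul_of_nonneg_left (le_max_left _ _) (hα k).le
      have h2b : ∑ k ∈ Finset.univ.erase n, α k * max ((ψbs k y - ψbd k y)) 0
          ≤ ∑ k, α k * max ((ψbs k y - ψbd k y)) 0 :=
        Finset.sum_le_sum_of_subset_of_nonneg (Finset.subset_univ _)
          (fun k _ _ => mul_nonneg (hα k).le (le_max_right _ _))
      exact le_trans h2a h2b
    have h3 : - (α n * (ψbs n y - ψbd n y)) ≤ max ((∑ k, α k * ψbd k y - ‖y‖ ^ 2 / 2)) 0 + ∑ k, α k * max ((ψbs k y - ψbd k y)) 0 := by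
      have hs1 : (∑ k, α k * ψbd k y - ‖y‖ ^ 2 / 2) ≤ max ((∑ k, α k * ψbd k y - ‖y‖ ^ 2 / 2)) 0 := le_max_left _ _
      have h0 : - (α n * (ψbs n y - ψbd n y))
          = (∑ k, α k * ψbd k y - ‖y‖ ^ 2 / 2) + ∑ k ∈ Finset.univ.erase n, α k * (ψbs k y - ψbd k y) := by linarith [h1]
      linarith [h2, hs1]
    have hnn : (0:ℝ) ≤ max ((∑ k, α k * ψbd k y - ‖y‖ ^ 2 / 2)) 0 + ∑ k, α k * max ((ψbs k y - ψbd k y)) 0 :=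
      add_nonneg (le_max_right _ _)
        (Finset.sum_nonneg fun k _ => mul_nonneg (hα k).le (le_max_right _ _))
    constructor
    · have h4 : - (ψbs n y - ψbd n y) ≤ (1/α n) * (max ((∑ k, α k * ψbd k y - ‖y‖ ^ 2 / 2)) 0 + ∑ k, α k * max ((ψbs k y - ψbd k y)) 0) := by
        rw [one_div, inv_mul_eq_div, le_div_iff₀ (hα n)]
        calc - (ψbs n y - ψbd n y) * α n = -(α n * (ψbs n y - ψbd n y)) := by ring
        _ ≤ _ := h3
      have h5 : (0:ℝ) ≤ max ((ψbs n y - ψbd n y)) 0 := le_max_right _ _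
      linarith
    · have h6 : (ψbs n y - ψbd n y) ≤ max ((ψbs n y - ψbd n y)) 0 := le_max_left _ _
      have h7 : (0:ℝ) ≤ (1/α n) * (max ((∑ k, α k * ψbd k y - ‖y‖ ^ 2 / 2)) 0 + ∑ k, α k * max ((ψbs k y - ψbd k y)) 0) :=
        mul_nonneg (one_div_nonneg.mpr (hα n).le) hnn
      linarith
  have hhT : ∀ n, Integrable (fun x => (ψbs n (gradient (ψs n) x) - ψbd n (gradient (ψs n) x))) (P n) := by
    intro n
    have h0 := hhPbar n
    rw [← hpush n] at h0
    exact (integrable_map_measure (hmH n).aestronglyMeasurable (hmT n).aemeasurable).mp h0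
  have hIeq : ∀ n, ∫ x, (ψbs n (gradient (ψs n) x) - ψbd n (gradient (ψs n) x)) ∂(P n) = ∫ y, (ψbs n y - ψbd n y) ∂Pbar := by
    intro n
    rw [← hpush n, integral_map (hmT n).aemeasurable (hmH n).aestronglyMeasurable]
  -- the tau-term bound
  have hsb : ∫ y, max ((∑ k, α k * ψbd k y - ‖y‖ ^ 2 / 2)) 0 ∂Pbar ≤ τ * ∫ y, max ((∑ k, α k * ψbd k y - ‖y‖ ^ 2 / 2)) 0 ∂Phat := by
    have l1 : ∫ y, max ((∑ k, α k * ψbd k y - ‖y‖ ^ 2 / 2)) 0 ∂Pbar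
        = (∫⁻ y, ENNReal.ofReal (max ((∑ k, α k * ψbd k y - ‖y‖ ^ 2 / 2)) 0) ∂Pbar).toReal :=
      integral_eq_lintegral_of_nonneg_ae (ae_of_all _ fun y => le_max_right _ _)
        (hmS.max measurable_const).aestronglyMeasurable
    have l2 : ∫ y, max ((∑ k, α k * ψbd k y - ‖y‖ ^ 2 / 2)) 0 ∂Phat
        = (∫⁻ y, ENNReal.ofReal (max ((∑ k, α k * ψbd k y - ‖y‖ ^ 2 / 2)) 0) ∂Phat).toReal :=
      integral_eq_lintegral_of_nonneg_ae (ae_of_all _ fun y => le_max_right _ _)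
        (hmS.max measurable_const).aestronglyMeasurable
    have hb : ∫⁻ y, ENNReal.ofReal (max ((∑ k, α k * ψbd k y - ‖y‖ ^ 2 / 2)) 0) ∂Phat < ⊤ :=
      (hasFiniteIntegral_iff_ofReal (f := fun y => max ((∑ k, α k * ψbd k y - ‖y‖ ^ 2 / 2)) 0)
        (ae_of_all _ fun y => le_max_right _ _)).mp hsplusPhat.2
    have l3 : ∫⁻ y, ENNReal.ofReal (max ((∑ k, α k * ψbd k y - ‖y‖ ^ 2 / 2)) 0) ∂Pbar
        ≤ ENNReal.ofReal τ * ∫⁻ y, ENNReal.ofReal (max ((∑ k, α k * ψbd k y - ‖y‖ ^ 2 / 2)) 0) ∂Phat :=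
      le_trans (lintegral_mono' hle le_rfl) (le_of_eq (lintegral_smul_measure _ _))
    rw [l1, l2]
    calc (∫⁻ y, ENNReal.ofReal (max ((∑ k, α k * ψbd k y - ‖y‖ ^ 2 / 2)) 0) ∂Pbar).toReal
        ≤ (ENNReal.ofReal τ * ∫⁻ y, ENNReal.ofReal (max ((∑ k, α k * ψbd k y - ‖y‖ ^ 2 / 2)) 0) ∂Phat).toReal :=
          ENNReal.toReal_mono (ENNReal.mul_ne_top ENNReal.ofReal_ne_top hb.ne) l3
      _ = τ * (∫⁻ y, ENNReal.ofReal (max ((∑ k, α k * ψbd k y - ‖y‖ ^ 2 / 2)) 0) ∂Phat).toReal := by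
          rw [ENNReal.toReal_mul, ENNReal.toReal_ofReal hτ0]
  have hSint : Integrable (fun y => (∑ k, α k * ψbd k y - ‖y‖ ^ 2 / 2)) Pbar := by
    have h0 : Integrable (fun y => -(∑ k, α k * (ψbs k y - ψbd k y))) Pbar :=
      (integrable_finset_sum _ fun k _ => (hhPbar k).const_mul (α k)).neg
    refine h0.congr (ae_of_all _ fun y => ?_)
    have := hsum y
    linarith
  have hhint_bound : -(τ * ∫ y, max ((∑ k, α k * ψbd k y - ‖y‖ ^ 2 / 2)) 0 ∂Phat) ≤ ∑ n, α n * ∫ y, (ψbs n y - ψbd n y) ∂Pbar := by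
    have e1 : ∫ y, (∑ k, α k * (ψbs k y - ψbd k y)) ∂Pbar = ∑ n, α n * ∫ y, (ψbs n y - ψbd n y) ∂Pbar := by
      rw [integral_finset_sum _ fun k _ => (hhPbar k).const_mul (α k)]
      exact Finset.sum_congr rfl fun k _ => integral_const_mul _ _
    have e3 : ∫ y, (∑ k, α k * (ψbs k y - ψbd k y)) ∂Pbar = - ∫ y, (∑ k, α k * ψbd k y - ‖y‖ ^ 2 / 2) ∂Pbar := by
      rw [← integral_neg]
      refine integral_congr_ae (ae_of_all _ fun y => ?_)
      have := hsum y
      linarith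
    have e4 : ∫ y, (∑ k, α k * ψbd k y - ‖y‖ ^ 2 / 2) ∂Pbar ≤ ∫ y, max ((∑ k, α k * ψbd k y - ‖y‖ ^ 2 / 2)) 0 ∂Pbar :=
      integral_mono hSint hsplusPbar fun y => le_max_left _ _
    rw [← e1, e3]
    linarith only [hsb, e4]
  -- the Delta identity
  have hIg : ∀ n, ∫ x, ((⟪x, gradient (ψdag n) x⟫ - ψbd n (gradient (ψdag n) x)) - ψs n x + lam * ‖gradient (ψbd n) (gradient (ψdag n) x) - x‖ ^ 2) ∂(P n)
      = (∫ x, (⟪x, gradient (ψdag n) x⟫ - ψbd n (gradient (ψdag n) x)) ∂(P n)) - (∫ x, ψs n x ∂(P n))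
        + lam * ∫ x, ‖gradient (ψbd n) (gradient (ψdag n) x) - x‖ ^ 2 ∂(P n) := by
    intro n
    rw [integral_add (show Integrable
        (fun x => (⟪x, gradient (ψdag n) x⟫ - ψbd n (gradient (ψdag n) x)) - ψs n x) (P n)
        from (hintM1 n).sub (hint_s n)) ((hintM3 n).const_mul lam),
      integral_sub (hintM1 n) (hint_s n), integral_const_mul]
  have hDelta : Δ = (∑ n, α n * ∫ x, ((⟪x, gradient (ψdag n) x⟫ - ψbd n (gradient (ψdag n) x)) - ψs n x + lam * ‖gradient (ψbd n) (gradient (ψdag n) x) - x‖ ^ 2) ∂(P n)) + τ * ∫ y, max ((∑ k, α k * ψbd k y - ‖y‖ ^ 2 / 2)) 0 ∂Phat := by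
    rw [hΔ, hM]
    have e : ∀ n ∈ Finset.univ, α n * ∫ x, ((⟪x, gradient (ψdag n) x⟫ - ψbd n (gradient (ψdag n) x)) - ψs n x + lam * ‖gradient (ψbd n) (gradient (ψdag n) x) - x‖ ^ 2) ∂(P n)
        = α n * (∫ x, (⟪x, gradient (ψdag n) x⟫ - ψbd n (gradient (ψdag n) x)) ∂(P n))
          - α n * (∫ x, ψs n x ∂(P n))
          + lam * (α n * ∫ x, ‖gradient (ψbd n) (gradient (ψdag n) x) - x‖ ^ 2 ∂(P n)) := fun n _ => by rw [hIg n]; ring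
    rw [Finset.sum_congr rfl e, Finset.sum_add_distrib, Finset.sum_sub_distrib,
      ← Finset.mul_sum]
    ring
  -- the main chain
  have key1 : ∀ n, (∫ x, (β / 2 * ‖gradient (ψs n) x - gradient (ψd n) x‖ ^ 2 + (lam * β ^ 2 - B / 2) * ‖gradient (ψdag n) x - gradient (ψd n) x‖ ^ 2) ∂(P n)) + ∫ y, (ψbs n y - ψbd n y) ∂Pbar ≤ ∫ x, ((⟪x, gradient (ψdag n) x⟫ - ψbd n (gradient (ψdag n) x)) - ψs n x + lam * ‖gradient (ψbd n) (gradient (ψdag n) x) - x‖ ^ 2) ∂(P n) := by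
    intro n
    have i1 : ∫ x, (((⟪x, gradient (ψdag n) x⟫ - ψbd n (gradient (ψdag n) x)) - ψs n x + lam * ‖gradient (ψbd n) (gradient (ψdag n) x) - x‖ ^ 2) - (ψbs n (gradient (ψs n) x) - ψbd n (gradient (ψs n) x))) ∂(P n)
        = ∫ x, ((⟪x, gradient (ψdag n) x⟫ - ψbd n (gradient (ψdag n) x)) - ψs n x + lam * ‖gradient (ψbd n) (gradient (ψdag n) x) - x‖ ^ 2) ∂(P n) - ∫ x, (ψbs n (gradient (ψs n) x) - ψbd n (gradient (ψs n) x)) ∂(P n) := integral_sub (hgint n) (hhT n)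
    have i2 : ∫ x, (β / 2 * ‖gradient (ψs n) x - gradient (ψd n) x‖ ^ 2 + (lam * β ^ 2 - B / 2) * ‖gradient (ψdag n) x - gradient (ψd n) x‖ ^ 2) ∂(P n) ≤ ∫ x, (((⟪x, gradient (ψdag n) x⟫ - ψbd n (gradient (ψdag n) x)) - ψs n x + lam * ‖gradient (ψbd n) (gradient (ψdag n) x) - x‖ ^ 2) - (ψbs n (gradient (ψs n) x) - ψbd n (gradient (ψs n) x))) ∂(P n) := by
      refine integral_mono (hintq n) ((hgint n).sub (hhT n)) fun x => ?_
      show (β / 2 * ‖gradient (ψs n) x - gradient (ψd n) x‖ ^ 2 + (lam * β ^ 2 - B / 2) * ‖gradient (ψdag n) x - gradient (ψd n) x‖ ^ 2) ≤ ((⟪x, gradient (ψdag n) x⟫ - ψbd n (gradient (ψdag n) x)) - ψs n x + lam * ‖gradient (ψbd n) (gradient (ψdag n) x) - x‖ ^ 2) - (ψbs n (gradient (ψs n) x) - ψbd n (gradient (ψs n) x))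
      have := hP n x
      linarith
    have i3 := hIeq n
    linarith only [i1, i2, i3]
  have key2 : (∑ n, α n * (∫ x, (β / 2 * ‖gradient (ψs n) x - gradient (ψd n) x‖ ^ 2 + (lam * β ^ 2 - B / 2) * ‖gradient (ψdag n) x - gradient (ψd n) x‖ ^ 2) ∂(P n))) + (∑ n, α n * ∫ y, (ψbs n y - ψbd n y) ∂Pbar)
      ≤ ∑ n, α n * ∫ x, ((⟪x, gradient (ψdag n) x⟫ - ψbd n (gradient (ψdag n) x)) - ψs n x + lam * ‖gradient (ψbd n) (gradient (ψdag n) x) - x‖ ^ 2) ∂(P n) := by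
    rw [← Finset.sum_add_distrib]
    refine Finset.sum_le_sum fun k _ => ?_
    have h1 := mul_le_mul_of_nonneg_left (key1 k) (hα k).le
    have e : α k * ((∫ x, (β / 2 * ‖gradient (ψs k) x - gradient (ψd k) x‖ ^ 2 + (lam * β ^ 2 - B / 2) * ‖gradient (ψdag k) x - gradient (ψd k) x‖ ^ 2) ∂(P k)) + ∫ y, (ψbs k y - ψbd k y) ∂Pbar)
        = α k * (∫ x, (β / 2 * ‖gradient (ψs k) x - gradient (ψd k) x‖ ^ 2 + (lam * β ^ 2 - B / 2) * ‖gradient (ψdag k) x - gradient (ψd k) x‖ ^ 2) ∂(P k)) + α k * ∫ y, (ψbs k y - ψbd k y) ∂Pbar := by ring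
    linarith only [h1, e]
  have hτR0 : (0:ℝ) ≤ τ * ∫ y, max ((∑ k, α k * ψbd k y - ‖y‖ ^ 2 / 2)) 0 ∂Phat :=
    mul_nonneg hτ0 (integral_nonneg fun y => le_max_right _ _)
  have hDge : ∑ n, α n * (∫ x, (β / 2 * ‖gradient (ψs n) x - gradient (ψd n) x‖ ^ 2 + (lam * β ^ 2 - B / 2) * ‖gradient (ψdag n) x - gradient (ψd n) x‖ ^ 2) ∂(P n)) ≤ Δ := by
    rw [hDelta]
    have h1 : -(τ * ∫ y, max ((∑ k, α k * ψbd k y - ‖y‖ ^ 2 / 2)) 0 ∂Phat) ≤ ∑ n, α n * ∫ y, (ψbs n y - ψbd n y) ∂Pbar :=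
      hhint_bound
    linarith only [key2, h1]
  have hqint0 : ∀ n, (0:ℝ) ≤ ∫ x, (β / 2 * ‖gradient (ψs n) x - gradient (ψd n) x‖ ^ 2 + (lam * β ^ 2 - B / 2) * ‖gradient (ψdag n) x - gradient (ψd n) x‖ ^ 2) ∂(P n) :=
    fun n => integral_nonneg fun x => hq0 n x
  have hsingle : α m * ∫ x, (β / 2 * ‖gradient (ψs m) x - gradient (ψd m) x‖ ^ 2 + (lam * β ^ 2 - B / 2) * ‖gradient (ψdag m) x - gradient (ψd m) x‖ ^ 2) ∂(P m) ≤ Δ :=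
    le_trans (Finset.single_le_sum (f := fun n => α n * ∫ x, (β / 2 * ‖gradient (ψs n) x - gradient (ψd n) x‖ ^ 2 + (lam * β ^ 2 - B / 2) * ‖gradient (ψdag n) x - gradient (ψd n) x‖ ^ 2) ∂(P n))
      (fun k _ => mul_nonneg (hα k).le (hqint0 k)) (Finset.mem_univ m)) hDge
  have hΔ0 : (0:ℝ) ≤ Δ := le_trans (mul_nonneg (hα m).le (hqint0 m)) hsingle
  have hqsplit : ∫ x, (β / 2 * ‖gradient (ψs m) x - gradient (ψd m) x‖ ^ 2 + (lam * β ^ 2 - B / 2) * ‖gradient (ψdag m) x - gradient (ψd m) x‖ ^ 2) ∂(P m)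
      = β/2 * (∫ x, ‖gradient (ψs m) x - gradient (ψd m) x‖ ^ 2 ∂(P m))
        + (lam * β ^ 2 - B/2) * (∫ x, ‖gradient (ψdag m) x - gradient (ψd m) x‖ ^ 2 ∂(P m)) := by
    rw [integral_add ((hintX m).const_mul _) ((hintY m).const_mul _),
      integral_const_mul, integral_const_mul]
  have hXI0 : (0:ℝ) ≤ ∫ x, ‖gradient (ψs m) x - gradient (ψd m) x‖ ^ 2 ∂(P m) :=
    integral_nonneg fun x => by positivity
  have hYI0 : (0:ℝ) ≤ ∫ x, ‖gradient (ψdag m) x - gradient (ψd m) x‖ ^ 2 ∂(P m) :=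
    integral_nonneg fun x => by positivity
  rw [hqsplit] at hsingle
  have hXb : α m * (β/2 * ∫ x, ‖gradient (ψs m) x - gradient (ψd m) x‖ ^ 2 ∂(P m)) ≤ Δ := by
    have h1 : (0:ℝ) ≤ α m * ((lam * β ^ 2 - B/2) * ∫ x, ‖gradient (ψdag m) x - gradient (ψd m) x‖ ^ 2 ∂(P m)) :=
      mul_nonneg (hα m).le (mul_nonneg hc2.le hYI0)
    nlinarith [hsingle]
  have hYb : α m * ((lam * β ^ 2 - B/2) * ∫ x, ‖gradient (ψdag m) x - gradient (ψd m) x‖ ^ 2 ∂(P m)) ≤ Δ := by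
    have h1 : (0:ℝ) ≤ α m * (β/2 * ∫ x, ‖gradient (ψs m) x - gradient (ψd m) x‖ ^ 2 ∂(P m)) :=
      mul_nonneg (hα m).le (mul_nonneg (by positivity) hXI0)
    nlinarith [hsingle]
  -- triangle-type bound
  have htri : ∀ t : ℝ, 0 < t → ∫ x, ‖gradient (ψdag m) x - gradient (ψs m) x‖ ^ 2 ∂(P m)
      ≤ (1+t) * (∫ x, ‖gradient (ψdag m) x - gradient (ψd m) x‖ ^ 2 ∂(P m))
        + (1+1/t) * (∫ x, ‖gradient (ψs m) x - gradient (ψd m) x‖ ^ 2 ∂(P m)) := by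
    intro t ht
    have hmono : ∫ x, ‖gradient (ψdag m) x - gradient (ψs m) x‖ ^ 2 ∂(P m)
        ≤ ∫ x, ((1+t) * ‖gradient (ψdag m) x - gradient (ψd m) x‖ ^ 2 + (1+1/t) * ‖gradient (ψs m) x - gradient (ψd m) x‖ ^ 2) ∂(P m) := by
      refine integral_mono (hint_dev m)
        (((hintY m).const_mul _).add ((hintX m).const_mul _)) fun x => ?_
      show ‖gradient (ψdag m) x - gradient (ψs m) x‖ ^ 2 ≤ _
      have h1 : ‖gradient (ψdag m) x - gradient (ψs m) x‖ ≤ ‖gradient (ψdag m) x - gradient (ψd m) x‖ + ‖gradient (ψs m) x - gradient (ψd m) x‖ := by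
        have h0 := norm_add_le (gradient (ψdag m) x - gradient (ψd m) x) (gradient (ψd m) x - gradient (ψs m) x)
        rw [sub_add_sub_cancel] at h0
        rw [norm_sub_rev (gradient (ψd m) x) (gradient (ψs m) x)] at h0
        exact h0
      have hA := norm_nonneg (gradient (ψdag m) x - gradient (ψd m) x)
      have hB := norm_nonneg (gradient (ψs m) x - gradient (ψd m) x)
      have hC := norm_nonneg (gradient (ψdag m) x - gradient (ψs m) x)
      have h6 : ‖gradient (ψdag m) x - gradient (ψs m) x‖ ^ 2
          ≤ (‖gradient (ψdag m) x - gradient (ψd m) x‖ + ‖gradient (ψs m) x - gradient (ψd m) x‖) ^ 2 := by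
        have := mul_self_le_mul_self hC h1
        nlinarith [this]
      have e : (1+t) * ‖gradient (ψdag m) x - gradient (ψd m) x‖ ^ 2 + (1+1/t) * ‖gradient (ψs m) x - gradient (ψd m) x‖ ^ 2
          - (‖gradient (ψdag m) x - gradient (ψd m) x‖ + ‖gradient (ψs m) x - gradient (ψd m) x‖) ^ 2
          = (1/t) * (t * ‖gradient (ψdag m) x - gradient (ψd m) x‖ - ‖gradient (ψs m) x - gradient (ψd m) x‖) ^ 2 := by
        field_simp
        ring
      have e2 : (0:ℝ) ≤ (1/t) * (t * ‖gradient (ψdag m) x - gradient (ψd m) x‖ - ‖gradient (ψs m) x - gradient (ψd m) x‖) ^ 2 :=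
        mul_nonneg (by positivity) (sq_nonneg _)
      linarith
    have heq : ∫ x, ((1+t) * ‖gradient (ψdag m) x - gradient (ψd m) x‖ ^ 2 + (1+1/t) * ‖gradient (ψs m) x - gradient (ψd m) x‖ ^ 2) ∂(P m)
        = (1+t) * (∫ x, ‖gradient (ψdag m) x - gradient (ψd m) x‖ ^ 2 ∂(P m))
          + (1+1/t) * (∫ x, ‖gradient (ψs m) x - gradient (ψd m) x‖ ^ 2 ∂(P m)) := by
      rw [integral_add ((hintY m).const_mul _) ((hintX m).const_mul _),
        integral_const_mul, integral_const_mul]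
    rw [heq] at hmono
    exact hmono
  -- conclude
  rcases eq_or_lt_of_le hΔ0 with hΔeq | hΔpos
  · -- Δ = 0
    have hXz : ∫ x, ‖gradient (ψs m) x - gradient (ψd m) x‖ ^ 2 ∂(P m) = 0 := by
      refine le_antisymm ?_ hXI0
      have h2 : (0:ℝ) < α m * (β/2) := mul_pos (hα m) (by linarith)
      refine le_of_mul_le_mul_left ?_ h2
      have e : α m * (β/2) * (∫ x, ‖gradient (ψs m) x - gradient (ψd m) x‖ ^ 2 ∂(P m))
          = α m * (β/2 * ∫ x, ‖gradient (ψs m) x - gradient (ψd m) x‖ ^ 2 ∂(P m)) := by ring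
      rw [e, mul_zero]
      linarith only [hXb, hΔeq]
    have hYz : ∫ x, ‖gradient (ψdag m) x - gradient (ψd m) x‖ ^ 2 ∂(P m) = 0 := by
      refine le_antisymm ?_ hYI0
      have h2 : (0:ℝ) < α m * (lam * β ^ 2 - B/2) := mul_pos (hα m) hc2
      refine le_of_mul_le_mul_left ?_ h2
      have e : α m * (lam * β ^ 2 - B/2) * (∫ x, ‖gradient (ψdag m) x - gradient (ψd m) x‖ ^ 2 ∂(P m))
          = α m * ((lam * β ^ 2 - B/2) * ∫ x, ‖gradient (ψdag m) x - gradient (ψd m) x‖ ^ 2 ∂(P m)) := by ring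
      rw [e, mul_zero]
      linarith only [hYb, hΔeq]
    have h1 := htri 1 one_pos
    rw [hXz, hYz] at h1
    rw [← hΔeq]
    simp only [mul_zero, zero_div, mul_zero, zero_mul]
    norm_num at h1 ⊢
    linarith [h1]
  · -- Δ > 0
    have haa : (Real.sqrt (2*Δ/α m)) ^ 2 = 2*Δ/α m :=
      Real.sq_sqrt (div_nonneg (by linarith) (hα m).le)
    have hp2 : (Real.sqrt (1/β)) ^ 2 = 1/β := Real.sq_sqrt (one_div_nonneg.mpr hβ.le)
    have hr2 : (Real.sqrt (1/(lam * β ^ 2 - B/2))) ^ 2 = 1/(lam * β ^ 2 - B/2) :=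
      Real.sq_sqrt (one_div_nonneg.mpr hc2.le)
    have haa0 : 0 < Real.sqrt (2*Δ/α m) :=
      Real.sqrt_pos.2 (div_pos (by linarith) (hα m))
    have hp0 : 0 < Real.sqrt (1/β) := Real.sqrt_pos.2 (one_div_pos.mpr hβ)
    have hr0 : 0 < Real.sqrt (1/(lam * β ^ 2 - B/2)) :=
      Real.sqrt_pos.2 (one_div_pos.mpr hc2)
    set aa := Real.sqrt (2*Δ/α m)
    set p := Real.sqrt (1/β)
    set r := Real.sqrt (1/(lam * β ^ 2 - B/2))
    have hA0 : 0 < aa * p := mul_pos haa0 hp0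
    have hB0 : 0 < aa * r := mul_pos haa0 hr0
    have hab2 : (aa * p) ^ 2 = 2*Δ/(α m * β) := by
      rw [mul_pow, haa, hp2, div_mul_div_comm, mul_one]
    have hbr2 : (aa * r) ^ 2 = 2*Δ/(α m * (lam * β ^ 2 - B/2)) := by
      rw [mul_pow, haa, hr2, div_mul_div_comm, mul_one]
    have hXa : ∫ x, ‖gradient (ψs m) x - gradient (ψd m) x‖ ^ 2 ∂(P m) ≤ (aa * p) ^ 2 := by
      rw [hab2, le_div_iff₀ (mul_pos (hα m) hβ)]
      nlinarith [hXb]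
    have hYa : ∫ x, ‖gradient (ψdag m) x - gradient (ψd m) x‖ ^ 2 ∂(P m) ≤ (aa * r) ^ 2 := by
      rw [hbr2, le_div_iff₀ (mul_pos (hα m) hc2)]
      nlinarith [hYb, hΔ0]
    have ht0 : 0 < (aa * p) / (aa * r) := div_pos hA0 hB0
    have h1 := htri ((aa * p) / (aa * r)) ht0
    have c1 : (1 + (aa * p) / (aa * r)) * (∫ x, ‖gradient (ψdag m) x - gradient (ψd m) x‖ ^ 2 ∂(P m))
        ≤ (1 + (aa * p) / (aa * r)) * (aa * r) ^ 2 :=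
      mul_le_mul_of_nonneg_left hYa (by nlinarith [ht0])
    have c2 : (1 + 1/((aa * p) / (aa * r))) * (∫ x, ‖gradient (ψs m) x - gradient (ψd m) x‖ ^ 2 ∂(P m))
        ≤ (1 + 1/((aa * p) / (aa * r))) * (aa * p) ^ 2 := by
      refine mul_le_mul_of_nonneg_left hXa ?_
      have : 0 < 1/((aa * p) / (aa * r)) := by positivity
      linarith
    have csum : (1 + (aa * p) / (aa * r)) * (aa * r) ^ 2
        + (1 + 1/((aa * p) / (aa * r))) * (aa * p) ^ 2 = (aa * p + aa * r) ^ 2 := by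
      field_simp [hA0.ne', hB0.ne']
      ring
    have hfin : (aa * p + aa * r) ^ 2 = (2 * Δ / α m) * (p + r) ^ 2 := by
      have : (aa * p + aa * r) ^ 2 = aa ^ 2 * (p + r) ^ 2 := by ring
      rw [this, haa]
    calc ∫ x, ‖gradient (ψdag m) x - gradient (ψs m) x‖ ^ 2 ∂(P m)
        ≤ (1 + (aa * p) / (aa * r)) * (∫ x, ‖gradient (ψdag m) x - gradient (ψd m) x‖ ^ 2 ∂(P m))
          + (1 + 1/((aa * p) / (aa * r))) * (∫ x, ‖gradient (ψs m) x - gradient (ψd m) x‖ ^ 2 ∂(P m)) := h1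
      _ ≤ (1 + (aa * p) / (aa * r)) * (aa * r) ^ 2
          + (1 + 1/((aa * p) / (aa * r))) * (aa * p) ^ 2 := add_le_add c1 c2
      _ = (aa * p + aa * r) ^ 2 := csum
      _ = (2 * Δ / α m) * (p + r) ^ 2 := hfin
end

section
/- Combined pointwise bound (inequality (21) of the paper). Let ψ̄‡ : ℝ^D → ℝ be differentiable convex, β-strongly convex and B-smooth (0 < β ≤ B < ∞), and let ψ‡ be its differentiable convex conjugate with ∇ψ‡ being (1/β)-Lipschitz, ∇ψ̄‡(∇ψ‡(x)) = x and ∇ψ‡(∇ψ̄‡(y)) = y for all x, y ∈ ℝ^D. Let ψ† : ℝ^D → ℝ be differentiable. Then for every x ∈ ℝ^D: ⟨x, ∇ψ†(x)⟩ − ψ̄‡(∇ψ†(x)) ≥ (⟨x, ∇ψ‡(x)⟩ − ψ̄‡(∇ψ‡(x))) − (B/(2β²)) · ‖x − ∇ψ̄‡(∇ψ†(x))‖². -/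
open MeasureTheory RealInnerProductSpace

lemma sconv_first_order {D : ℕ} (β : ℝ) (ψ : EuclideanSpace ℝ (Fin D) → ℝ)
    (hdiff : Differentiable ℝ ψ)
    (hsc : ConvexOn ℝ Set.univ (fun y => ψ y - β / 2 * ‖y‖ ^ 2)) (b a : EuclideanSpace ℝ (Fin D)) :
    ψ b + ⟪gradient ψ b, a - b⟫ + β / 2 * ‖a - b‖ ^ 2 ≤ ψ a := by
  set c : ℝ → EuclideanSpace ℝ (Fin D) := fun t => b + t • (a - b) with hc
  have hcderiv : ∀ t : ℝ, HasDerivAt c (a - b) t := by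
    intro t
    simpa [hc] using ((hasDerivAt_id t).smul_const (a - b)).const_add b
  have hc0 : c 0 = b := by simp [hc]
  have hc1 : c 1 = a := by simp [hc]
  set φ : ℝ → ℝ := fun t => ψ (c t) - β / 2 * ‖c t‖ ^ 2 with hφ
  have hφconv : ConvexOn ℝ Set.univ φ := by
    have h := hsc.comp_affineMap (AffineMap.lineMap b a : ℝ →ᵃ[ℝ] EuclideanSpace ℝ (Fin D))
    have : ((fun y => ψ y - β / 2 * ‖y‖ ^ 2) ∘ (AffineMap.lineMap b a : ℝ →ᵃ[ℝ] _)) = φ := by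
      funext t
      simp only [Function.comp, AffineMap.coe_lineMap, hφ, hc]
      rw [vadd_eq_add, vsub_eq_sub, add_comm]
    rwa [this, Set.preimage_univ] at h
  have hψfd : HasFDerivAt ψ (InnerProductSpace.toDual ℝ _ (gradient ψ b)) b :=
    hasGradientAt_iff_hasFDerivAt.mp (hdiff b).hasGradientAt
  have hψfd0 : HasFDerivAt ψ (InnerProductSpace.toDual ℝ _ (gradient ψ b)) (c 0) := by
    rwa [hc0]
  have hd1 : HasDerivAt (fun t => ψ (c t)) ⟪gradient ψ b, a - b⟫ 0 := by
    have h := hψfd0.comp_hasDerivAt 0 (hcderiv 0)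
    simpa [InnerProductSpace.toDual_apply_apply, Function.comp_def] using h
  have hd2 : HasDerivAt (fun t => β / 2 * ‖c t‖ ^ 2) (β * ⟪b, a - b⟫) 0 := by
    have hinner : HasDerivAt (fun t => ⟪c t, c t⟫) (⟪c 0, a - b⟫ + ⟪a - b, c 0⟫) 0 :=
      HasDerivAt.inner ℝ (hcderiv 0) (hcderiv 0)
    have h := hinner.const_mul (β / 2)
    have heq : (fun t => β / 2 * ⟪c t, c t⟫) = fun t => β / 2 * ‖c t‖ ^ 2 := by
      funext t; rw [real_inner_self_eq_norm_sq]
    rw [heq] at h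
    refine h.congr_deriv ?_
    rw [hc0, real_inner_comm b (a - b)]
    ring
  have hdφ : HasDerivAt φ (⟪gradient ψ b, a - b⟫ - β * ⟪b, a - b⟫) 0 := hd1.sub hd2
  have hslope := hφconv.le_slope_of_hasDerivAt (Set.mem_univ 0) (Set.mem_univ 1)
    zero_lt_one hdφ
  rw [slope_def_field] at hslope
  simp only [hφ, hc0, hc1] at hslope
  have hexp : ‖a - b‖ ^ 2 = ‖a‖ ^ 2 - 2 * ⟪b, a⟫ + ‖b‖ ^ 2 := by
    rw [← real_inner_self_eq_norm_sq, ← real_inner_self_eq_norm_sq, ← real_inner_self_eq_norm_sq,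
      inner_sub_sub_self]
    rw [real_inner_comm a b]; ring
  have hexp2 : ⟪b, a - b⟫ = ⟪b, a⟫ - ‖b‖ ^ 2 := by
    rw [inner_sub_right, real_inner_self_eq_norm_sq]
  rw [hexp2] at hslope
  have : (ψ a - β / 2 * ‖a‖ ^ 2 - (ψ b - β / 2 * ‖b‖ ^ 2)) / (1 - 0)
      = ψ a - β / 2 * ‖a‖ ^ 2 - ψ b + β / 2 * ‖b‖ ^ 2 := by ring
  rw [this] at hslope
  rw [hexp]
  ring_nf at hslope ⊢
  linarith

/-- Combined pointwise bound (inequality (21)):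
for `ψbd` differentiable convex, `β`-strongly convex and `B`-smooth
(`0 < β ≤ B`), with differentiable convex conjugate `ψd` having `(1/β)`-Lipschitz
gradient and mutually inverse gradients, and any differentiable `ψdag`,
`⟪x, ∇ψdag x⟫ − ψbd (∇ψdag x) ≥ (⟪x, ∇ψd x⟫ − ψbd (∇ψd x)) − (B/(2β²)) ‖x − ∇ψbd (∇ψdag x)‖²`. -/
theorem pointwise_combined_bound {D : ℕ} (β B : ℝ) (hβ : 0 < β) (hβB : β ≤ B)
    (ψbd ψd ψdag : EuclideanSpace ℝ (Fin D) → ℝ)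
    (hψbd_conv : ConvexOn ℝ Set.univ ψbd)
    (hψbd_diff : Differentiable ℝ ψbd)
    (hψbd_sconv : ConvexOn ℝ Set.univ (fun y => ψbd y - β / 2 * ‖y‖ ^ 2))
    (hψbd_smooth : ∀ x y, ‖gradient ψbd x - gradient ψbd y‖ ≤ B * ‖x - y‖)
    (hψd_diff : Differentiable ℝ ψd)
    (hψd_conj : ∀ x, IsLUB (Set.range fun y => ⟪y, x⟫ - ψbd y) (ψd x))
    (hψd_lip : ∀ x y, ‖gradient ψd x - gradient ψd y‖ ≤ (1 / β) * ‖x - y‖)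
    (hinv1 : ∀ x, gradient ψbd (gradient ψd x) = x)
    (hinv2 : ∀ y, gradient ψd (gradient ψbd y) = y)
    (hψdag_diff : Differentiable ℝ ψdag) :
    ∀ x, ⟪x, gradient ψdag x⟫ - ψbd (gradient ψdag x) ≥
      (⟪x, gradient ψd x⟫ - ψbd (gradient ψd x))
        - B / (2 * β ^ 2) * ‖x - gradient ψbd (gradient ψdag x)‖ ^ 2 := by
  intro x
  set u := gradient ψdag x with hu
  set v := gradient ψd x with hv
  have key := sconv_first_order β ψbd hψbd_diff hψbd_sconv u v
  -- ψbd u + ⟪∇ψbd u, v - u⟫ + β/2 ‖v - u‖² ≤ ψbd v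
  set g : ℝ := ‖x - gradient ψbd u‖ with hg
  set t : ℝ := ‖v - u‖ with ht
  have hlip : t ≤ (1 / β) * g := by
    have h := hψd_lip x (gradient ψbd u)
    rw [hinv2 u] at h
    exact h
  have hcs : ⟪x - gradient ψbd u, v - u⟫ ≤ g * t :=
    real_inner_le_norm _ _
  have hinner : ⟪x, v - u⟫ - ⟪gradient ψbd u, v - u⟫ = ⟪x - gradient ψbd u, v - u⟫ := by
    rw [inner_sub_left]
  have hsplit : ⟪x, v⟫ - ⟪x, u⟫ = ⟪x, v - u⟫ := by rw [inner_sub_right]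
  have hge : ⟪x, v⟫ - ψbd v - (⟪x, u⟫ - ψbd u) ≤ g * t - β / 2 * t ^ 2 := by
    have : ⟪x, v⟫ - ψbd v - (⟪x, u⟫ - ψbd u)
        ≤ ⟪x, v - u⟫ - ⟪gradient ψbd u, v - u⟫ - β / 2 * t ^ 2 := by
      rw [← hsplit] at *; linarith [key]
    rw [hinner] at this
    linarith [hcs]
  have ht0 : 0 ≤ t := norm_nonneg _
  have hg0 : 0 ≤ g := norm_nonneg _
  have hβt : β * t ≤ g := by
    refine (le_div_iff₀' hβ).mp ?_
    rw [div_eq_inv_mul]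
    simpa [one_div] using hlip
  have hfinal : g * t - β / 2 * t ^ 2 ≤ B / (2 * β ^ 2) * g ^ 2 := by
    have h1 : g * t - β / 2 * t ^ 2 ≤ g ^ 2 / (2 * β) := by
      rw [le_div_iff₀ (by positivity : (0:ℝ) < 2 * β)]
      nlinarith [sq_nonneg (β * t - g)]
    have hco : 1 / (2 * β) ≤ B / (2 * β ^ 2) := by
      rw [div_le_div_iff₀ (by positivity) (by positivity)]
      nlinarith [hβ, hβB]
    have h2 : g ^ 2 / (2 * β) ≤ B / (2 * β ^ 2) * g ^ 2 := by
      calc g ^ 2 / (2 * β) = 1 / (2 * β) * g ^ 2 := by ring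
        _ ≤ B / (2 * β ^ 2) * g ^ 2 := mul_le_mul_of_nonneg_right hco (sq_nonneg g)
    linarith
  linarith
end

section
/- Integrated cycle-regularized lower bound (inequality (22) of the paper). Let P be a Borel probability measure on ℝ^D. Let ψ̄‡ : ℝ^D → ℝ be differentiable convex, β-strongly convex and B-smooth (0 < β ≤ B < ∞), and let ψ‡ be its differentiable convex conjugate with ∇ψ‡ being (1/β)-Lipschitz and the gradients mutually inverse (∇ψ̄‡∘∇ψ‡ = id = ∇ψ‡∘∇ψ̄‡). Let ψ† : ℝ^D → ℝ be differentiable, and let λ > 0. Assuming all integrands are P-integrable, ∫ [⟨x, ∇ψ†(x)⟩ − ψ̄‡(∇ψ†(x))] dP(x) + λ · ∫ ‖∇ψ̄‡(∇ψ†(x)) − x‖² dP(x) ≥ ∫ ψ‡(x) dP(x) + (λ − B/(2β²)) · ∫ ‖∇ψ̄‡(∇ψ†(x)) − x‖² dP(x). -/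
open MeasureTheory RealInnerProductSpace

lemma convex_first_order {D : ℕ} {f : EuclideanSpace ℝ (Fin D) → ℝ}
    (hc : ConvexOn ℝ Set.univ f) {y : EuclideanSpace ℝ (Fin D)}
    {φ : EuclideanSpace ℝ (Fin D) →L[ℝ] ℝ} (hf : HasFDerivAt f φ y)
    (z : EuclideanSpace ℝ (Fin D)) : f y + φ (z - y) ≤ f z := by
  set g : ℝ → ℝ := fun t => f (y + t • (z - y)) with hg
  have hgconv : ConvexOn ℝ Set.univ g := by
    have := hc.comp_affineMap (AffineMap.lineMap y z : ℝ →ᵃ[ℝ] EuclideanSpace ℝ (Fin D))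
    have heq : (f ∘ (AffineMap.lineMap y z : ℝ →ᵃ[ℝ] EuclideanSpace ℝ (Fin D))) = g := by
      funext t
      simp [g, AffineMap.lineMap_apply, add_comm]
    rw [heq] at this
    simpa using this
  have hline : HasDerivAt (fun t : ℝ => y + t • (z - y)) (z - y) (0 : ℝ) := by
    simpa using ((hasDerivAt_id (0:ℝ)).smul_const (z - y)).const_add y
  have hf' : HasFDerivAt f φ ((fun t : ℝ => y + t • (z - y)) 0) := by simpa using hf
  have hgd : HasDerivAt g (φ (z - y)) 0 := hf'.comp_hasDerivAt 0 hline
  have hs := hgconv.le_slope_of_hasDerivAt (Set.mem_univ (0:ℝ)) (Set.mem_univ (1:ℝ))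
    one_pos hgd
  have h0 : g 0 = f y := by simp [g]
  have h1 : g 1 = f z := by simp [g]
  rw [slope_def_field] at hs
  simp [h0, h1, div_one] at hs
  rw [map_sub] at *; linarith

lemma hasFDerivAt_normsq {D : ℕ} (y : EuclideanSpace ℝ (Fin D)) :
    HasFDerivAt (fun v : EuclideanSpace ℝ (Fin D) => ‖v‖^2)
      ((2:ℝ) • (innerSL ℝ y : EuclideanSpace ℝ (Fin D) →L[ℝ] ℝ)) y := by
  have h := (hasFDerivAt_id (𝕜 := ℝ) y).inner ℝ (hasFDerivAt_id y)
  have hfun : (fun v : EuclideanSpace ℝ (Fin D) => (inner ℝ v v : ℝ)) = fun v => ‖v‖^2 := by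
    funext v; exact real_inner_self_eq_norm_sq v
  simp only [id] at h
  rw [hfun] at h
  refine h.congr_fderiv ?_
  ext w
  simp [fderivInnerCLM_apply, real_inner_comm, two_mul]

lemma strong_first_order {D : ℕ} {β : ℝ} {f : EuclideanSpace ℝ (Fin D) → ℝ}
    (hc : ConvexOn ℝ Set.univ (fun v => f v - β / 2 * ‖v‖ ^ 2))
    (hd : Differentiable ℝ f) (y z : EuclideanSpace ℝ (Fin D)) :
    f y + ⟪gradient f y, z - y⟫ + β / 2 * ‖z - y‖ ^ 2 ≤ f z := by
  have hfd : HasFDerivAt f (InnerProductSpace.toDual ℝ _ (gradient f y)) y :=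
    hasGradientAt_iff_hasFDerivAt.mp (hd y).hasGradientAt
  have hφ : HasFDerivAt (fun v : EuclideanSpace ℝ (Fin D) => f v - β / 2 * ‖v‖ ^ 2)
      (InnerProductSpace.toDual ℝ _ (gradient f y)
        - (β / 2) • ((2:ℝ) • (innerSL ℝ y : EuclideanSpace ℝ (Fin D) →L[ℝ] ℝ))) y := by
    have h2 := (hasFDerivAt_normsq y).const_smul (β / 2)
    exact hfd.sub h2
  have key := convex_first_order hc hφ z
  simp only [ContinuousLinearMap.sub_apply, ContinuousLinearMap.smul_apply,
    InnerProductSpace.toDual_apply_apply, innerSL_apply_apply, smul_eq_mul] at key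
  have e1 : ‖z - y‖ ^ 2 = ‖z‖ ^ 2 - 2 * ⟪z, y⟫ + ‖y‖ ^ 2 := norm_sub_sq_real z y
  have e2 : ⟪y, z - y⟫ = ⟪y, z⟫ - ⟪y, y⟫ := inner_sub_right y z y
  have e3 : ⟪y, y⟫ = ‖y‖ ^ 2 := real_inner_self_eq_norm_sq y
  have e4 : ⟪y, z⟫ = ⟪z, y⟫ := real_inner_comm z y
  rw [e2, e3, e4] at key
  rw [e1]
  ring_nf at key ⊢
  linarith [key]

/-- Integrated cycle-regularized lower bound (inequality (22)):
for a Borel probability measure `P`, `ψbd` differentiable convex, `β`-strongly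
convex and `B`-smooth (`0 < β ≤ B`), with differentiable convex conjugate `ψd`
having `(1/β)`-Lipschitz gradient and mutually inverse gradients, any
differentiable `ψdag`, and `λ > 0`,
`∫ [⟪x, ∇ψdag x⟫ − ψbd (∇ψdag x)] dP + λ ∫ ‖∇ψbd (∇ψdag x) − x‖² dP
  ≥ ∫ ψd dP + (λ − B/(2β²)) ∫ ‖∇ψbd (∇ψdag x) − x‖² dP`. -/
theorem integrated_cycle_regularized_lower_bound {D : ℕ}
    (P : Measure (EuclideanSpace ℝ (Fin D))) [IsProbabilityMeasure P]
    (β B : ℝ) (hβ : 0 < β) (hβB : β ≤ B)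
    (ψbd ψd ψdag : EuclideanSpace ℝ (Fin D) → ℝ)
    (hψbd_conv : ConvexOn ℝ Set.univ ψbd)
    (hψbd_diff : Differentiable ℝ ψbd)
    (hψbd_sconv : ConvexOn ℝ Set.univ (fun y => ψbd y - β / 2 * ‖y‖ ^ 2))
    (hψbd_smooth : ∀ x y, ‖gradient ψbd x - gradient ψbd y‖ ≤ B * ‖x - y‖)
    (hψd_diff : Differentiable ℝ ψd)
    (hψd_conj : ∀ x, IsLUB (Set.range fun y => ⟪y, x⟫ - ψbd y) (ψd x))
    (hψd_lip : ∀ x y, ‖gradient ψd x - gradient ψd y‖ ≤ (1 / β) * ‖x - y‖)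
    (hinv1 : ∀ x, gradient ψbd (gradient ψd x) = x)
    (hinv2 : ∀ y, gradient ψd (gradient ψbd y) = y)
    (hψdag_diff : Differentiable ℝ ψdag)
    (lam : ℝ) (hlam : 0 < lam)
    (hint1 : Integrable (fun x => ⟪x, gradient ψdag x⟫ - ψbd (gradient ψdag x)) P)
    (hint2 : Integrable (fun x => ‖gradient ψbd (gradient ψdag x) - x‖ ^ 2) P)
    (hint3 : Integrable ψd P) :
    (∫ x, (⟪x, gradient ψdag x⟫ - ψbd (gradient ψdag x)) ∂P)
      + lam * ∫ x, ‖gradient ψbd (gradient ψdag x) - x‖ ^ 2 ∂P ≥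
    (∫ x, ψd x ∂P)
      + (lam - B / (2 * β ^ 2)) * ∫ x, ‖gradient ψbd (gradient ψdag x) - x‖ ^ 2 ∂P := by
  set g := fun x => gradient ψdag x with hg
  have hpt : ∀ x, ψd x ≤ (⟪x, gradient ψdag x⟫ - ψbd (gradient ψdag x))
      + B / (2 * β ^ 2) * ‖gradient ψbd (gradient ψdag x) - x‖ ^ 2 := by
    intro x
    set y := gradient ψdag x with hy
    set u := gradient ψbd y with hu
    apply (hψd_conj x).2
    rintro _ ⟨w, rfl⟩
    have hsf := strong_first_order hψbd_sconv hψbd_diff y w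
    have hcs : ⟪x - u, w - y⟫ ≤ ‖x - u‖ * ‖w - y‖ := real_inner_le_norm _ _
    have ei1 : ⟪x, w - y⟫ = ⟪x, w⟫ - ⟪x, y⟫ := inner_sub_right x w y
    have ei2 : ⟪x - u, w - y⟫ = ⟪x, w - y⟫ - ⟪u, w - y⟫ := inner_sub_left x u (w - y)
    have ei3 : ⟪w, x⟫ = ⟪x, w⟫ := real_inner_comm x w
    have bnorm : ‖u - x‖ = ‖x - u‖ := norm_sub_rev u x
    have hβ2 : (0:ℝ) < β ^ 2 := by positivity
    have hamgm : ‖x - u‖ * ‖w - y‖ ≤ β / 2 * ‖w - y‖ ^ 2 + B / (2 * β ^ 2) * ‖x - u‖ ^ 2 := by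
      have hnum : (0:ℝ) ≤ β * (β * ‖w - y‖ - ‖x - u‖) ^ 2 + (B - β) * ‖x - u‖ ^ 2 := by
        have h1 : (0:ℝ) ≤ β * (β * ‖w - y‖ - ‖x - u‖) ^ 2 :=
          mul_nonneg hβ.le (sq_nonneg _)
        have h2 : (0:ℝ) ≤ (B - β) * ‖x - u‖ ^ 2 :=
          mul_nonneg (by linarith) (sq_nonneg _)
        linarith
      have heq : β / 2 * ‖w - y‖ ^ 2 + B / (2 * β ^ 2) * ‖x - u‖ ^ 2 - ‖x - u‖ * ‖w - y‖
          = (β * (β * ‖w - y‖ - ‖x - u‖) ^ 2 + (B - β) * ‖x - u‖ ^ 2) / (2 * β ^ 2) := by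
        field_simp
        ring
      have hd := div_nonneg hnum (by positivity : (0:ℝ) ≤ 2 * β ^ 2)
      linarith
    rw [bnorm]
    linarith
  have hB : (0:ℝ) < B := lt_of_lt_of_le hβ hβB
  have hc0 : (0:ℝ) ≤ B / (2 * β ^ 2) := by positivity
  have hint4 : Integrable (fun x => (⟪x, gradient ψdag x⟫ - ψbd (gradient ψdag x))
      + B / (2 * β ^ 2) * ‖gradient ψbd (gradient ψdag x) - x‖ ^ 2) P :=
    hint1.add (hint2.const_mul _)
  have hmono := integral_mono hint3 hint4 hpt
  rw [integral_add hint1 (hint2.const_mul _), integral_const_mul] at hmono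
  have hring : (lam - B / (2 * β ^ 2)) * ∫ x, ‖gradient ψbd (gradient ψdag x) - x‖ ^ 2 ∂P
      = lam * (∫ x, ‖gradient ψbd (gradient ψdag x) - x‖ ^ 2 ∂P)
        - B / (2 * β ^ 2) * ∫ x, ‖gradient ψbd (gradient ψdag x) - x‖ ^ 2 ∂P := by ring
  rw [ge_iff_le, hring]
  linarith
end
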